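/- arXiv:1608.01305 — 5 statements merged into one kernel-verified Lean document; each statement's English description precedes it below -/
import Mathlib

section
/- For the elephant random walk with p ∈ (0,1), for all n ≥ 1 one has E[S_n] = (2q−1)·Γ(n+2p−1)/(Γ(2p)·Γ(n)). -/
open MeasureTheory Filter

/-- ERW explicit mean: `E[S_n] = (2q-1) Γ(n+2p-1) / (Γ(2p) Γ(n))`. -/
theorem erw_mean_formula
    {Ω : Type*} {m0 : MeasurableSpace Ω} (μ : Measure Ω) [IsProbabilityMeasure μ]
    (p q : ℝ) (hp : p ∈ Set.Icc (0:ℝ) 1) (hq : q ∈ Set.Icc (0:ℝ) 1)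
    (σ : ℕ → Ω → ℝ) (hσmeas : ∀ k, Measurable (σ k))
    (hval : ∀ k ≥ 1, ∀ᵐ ω ∂μ, σ k ω = 1 ∨ σ k ω = -1)
    (hq1 : μ {ω | σ 1 ω = 1} = ENNReal.ofReal q)
    (F : ℕ → MeasurableSpace Ω)
    (hF : ∀ n, F n = ⨆ k ∈ Set.Icc 1 n, MeasurableSpace.comap (σ k) inferInstance)
    (S : ℕ → Ω → ℝ) (hS : ∀ n ω, S n ω = ∑ k ∈ Finset.Icc 1 n, σ k ω)
    (hmodel : ∀ n ≥ 1, ∀ s : ℝ, (s = 1 ∨ s = -1) →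
      μ[(fun ω => if σ (n+1) ω = s then (1:ℝ) else 0) | F n]
        =ᵐ[μ] fun ω => (n : ℝ)⁻¹ * ∑ k ∈ Finset.Icc 1 n,
          (p * (if σ k ω = s then (1:ℝ) else 0)
            + (1 - p) * (if σ k ω = -s then (1:ℝ) else 0)))
    (hp' : p ∈ Set.Ioo (0:ℝ) 1) :
    ∀ n : ℕ, 1 ≤ n →
      ∫ ω, S n ω ∂μ =
        (2 * q - 1) * Real.Gamma ((n : ℝ) + 2 * p - 1)
          / (Real.Gamma (2 * p) * Real.Gamma (n : ℝ)) := by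
  classical
  obtain ⟨hp0, hp1⟩ := hp'
  -- F n ≤ m0
  have hFle : ∀ n, F n ≤ m0 := by
    intro n
    rw [hF]
    refine iSup_le fun k => iSup_le fun _ => ?_
    exact measurable_iff_comap_le.mp (hσmeas k)
  -- indicator functions
  have hI_eq : ∀ k (s : ℝ), (fun ω => if σ k ω = s then (1:ℝ) else 0)
      = Set.indicator {ω | σ k ω = s} (fun _ => (1:ℝ)) := by
    intro k s
    funext ω
    by_cases h : σ k ω = s <;> simp [h]
  have hI_int : ∀ k (s : ℝ), Integrable (fun ω => if σ k ω = s then (1:ℝ) else 0) μ := by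
    intro k s
    rw [hI_eq]
    exact (integrable_const (1:ℝ)).indicator (hσmeas k (measurableSet_singleton s))
  -- σ k a.e. equals I 1 - I (-1)
  have hsig_ae : ∀ k, 1 ≤ k → (fun ω => σ k ω)
      =ᵐ[μ] fun ω => (if σ k ω = 1 then (1:ℝ) else 0) - (if σ k ω = -1 then (1:ℝ) else 0) := by
    intro k hk
    filter_upwards [hval k hk] with ω hω
    rcases hω with h | h <;> rw [h] <;> norm_num
  have hsig_int : ∀ k, 1 ≤ k → Integrable (σ k) μ := by
    intro k hk
    exact ((hI_int k 1).sub (hI_int k (-1))).congr (hsig_ae k hk).symm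
  have hsig_integral : ∀ k, 1 ≤ k → ∫ ω, σ k ω ∂μ
      = (∫ ω, (if σ k ω = 1 then (1:ℝ) else 0) ∂μ)
        - ∫ ω, (if σ k ω = -1 then (1:ℝ) else 0) ∂μ := by
    intro k hk
    rw [integral_congr_ae (hsig_ae k hk), integral_sub (hI_int k 1) (hI_int k (-1))]
  -- S integrable, integral of S
  have hS_int : ∀ n, Integrable (S n) μ := by
    intro n
    have : S n = fun ω => ∑ k ∈ Finset.Icc 1 n, σ k ω := funext fun ω => hS n ω
    rw [this]
    exact integrable_finset_sum _ fun k hk => hsig_int k (Finset.mem_Icc.mp hk).1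
  have hS_integral : ∀ n, ∫ ω, S n ω ∂μ = ∑ k ∈ Finset.Icc 1 n, ∫ ω, σ k ω ∂μ := by
    intro n
    have : (fun ω => S n ω) = fun ω => ∑ k ∈ Finset.Icc 1 n, σ k ω := funext fun ω => hS n ω
    rw [this, integral_finset_sum _ fun k hk => hsig_int k (Finset.mem_Icc.mp hk).1]
  -- key model step: integral of indicator of σ (n+1)
  have hstep : ∀ n, 1 ≤ n → ∀ s : ℝ, (s = 1 ∨ s = -1) →
      ∫ ω, (if σ (n+1) ω = s then (1:ℝ) else 0) ∂μ
        = (n:ℝ)⁻¹ * ∑ k ∈ Finset.Icc 1 n,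
            (p * ∫ ω, (if σ k ω = s then (1:ℝ) else 0) ∂μ
              + (1-p) * ∫ ω, (if σ k ω = -s then (1:ℝ) else 0) ∂μ) := by
    intro n hn s hs
    have h1 : ∫ ω, (μ[(fun ω => if σ (n+1) ω = s then (1:ℝ) else 0) | F n]) ω ∂μ
        = ∫ ω, (if σ (n+1) ω = s then (1:ℝ) else 0) ∂μ :=
      integral_condExp (hFle n)
    have h2 := integral_congr_ae (hmodel n hn s hs)
    rw [h2] at h1
    rw [← h1, MeasureTheory.integral_const_mul]
    congr 1
    rw [show (∫ a, ∑ k ∈ Finset.Icc 1 n,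
          ((p * if σ k a = s then (1:ℝ) else 0) + (1-p) * if σ k a = -s then (1:ℝ) else 0) ∂μ)
        = ∑ k ∈ Finset.Icc 1 n, ∫ a,
          ((p * if σ k a = s then (1:ℝ) else 0) + (1-p) * if σ k a = -s then (1:ℝ) else 0) ∂μ
      from integral_finset_sum _ fun k hk =>
        ((hI_int k s).const_mul p).add ((hI_int k (-s)).const_mul (1-p))]
    refine Finset.sum_congr rfl fun k hk => ?_
    rw [integral_add ((hI_int k s).const_mul p) ((hI_int k (-s)).const_mul (1-p)),
      MeasureTheory.integral_const_mul, MeasureTheory.integral_const_mul]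
  -- recurrence for the mean of σ (n+1)
  have hrec : ∀ n, 1 ≤ n →
      ∫ ω, σ (n+1) ω ∂μ = (2*p - 1) / (n:ℝ) * ∫ ω, S n ω ∂μ := by
    intro n hn
    have e1 := hstep n hn 1 (Or.inl rfl)
    have e2 := hstep n hn (-1) (Or.inr rfl)
    have hneg : (-(-1:ℝ)) = 1 := by norm_num
    rw [hneg] at e2
    rw [hsig_integral (n+1) (by omega), e1, e2, hS_integral n, ← mul_sub,
      ← Finset.sum_sub_distrib]
    have : ∑ k ∈ Finset.Icc 1 n, ∫ ω, σ k ω ∂μ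
        = ∑ k ∈ Finset.Icc 1 n,
            ((∫ ω, (if σ k ω = 1 then (1:ℝ) else 0) ∂μ)
              - ∫ ω, (if σ k ω = -1 then (1:ℝ) else 0) ∂μ) :=
      Finset.sum_congr rfl fun k hk => hsig_integral k (Finset.mem_Icc.mp hk).1
    rw [this, div_eq_mul_inv, mul_comm (2*p-1) ((n:ℝ)⁻¹), mul_assoc]
    congr 1
    rw [Finset.mul_sum]
    exact Finset.sum_congr rfl fun k hk => by ring
  -- base value: E[σ 1] = 2q - 1
  have hsum1 : (∫ ω, (if σ 1 ω = 1 then (1:ℝ) else 0) ∂μ)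
      + ∫ ω, (if σ 1 ω = -1 then (1:ℝ) else 0) ∂μ = 1 := by
    rw [← integral_add (hI_int 1 1) (hI_int 1 (-1))]
    have hae : (fun ω => (if σ 1 ω = 1 then (1:ℝ) else 0) + (if σ 1 ω = -1 then (1:ℝ) else 0))
        =ᵐ[μ] fun _ => (1:ℝ) := by
      filter_upwards [hval 1 le_rfl] with ω hω
      rcases hω with h | h <;> rw [h] <;> norm_num
    rw [integral_congr_ae hae]
    simp
  have hq_val : ∫ ω, (if σ 1 ω = 1 then (1:ℝ) else 0) ∂μ = q := by
    have hm1 : MeasurableSet {ω | σ 1 ω = 1} := hσmeas 1 (measurableSet_singleton 1)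
    rw [hI_eq 1 1, integral_indicator_const (1:ℝ) hm1,
      Measure.real, hq1, smul_eq_mul, mul_one, ENNReal.toReal_ofReal hq.1]
  have hbase : ∫ ω, σ 1 ω ∂μ = 2*q - 1 := by
    rw [hsig_integral 1 le_rfl, hq_val]
    have : ∫ ω, (if σ 1 ω = -1 then (1:ℝ) else 0) ∂μ = 1 - q := by linarith [hsum1, hq_val]
    rw [this]; ring
  -- Gamma positivity facts
  have hΓ2p : Real.Gamma (2*p) ≠ 0 := (Real.Gamma_pos_of_pos (by linarith)).ne'
  -- main induction
  intro n hn
  induction n, hn using Nat.le_induction with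
  | base =>
      have hS1 : (fun ω => S 1 ω) = fun ω => σ 1 ω := by
        funext ω; rw [hS]; simp
      rw [hS1, hbase]
      push_cast
      rw [show (1:ℝ) + 2*p - 1 = 2*p by ring, Real.Gamma_one]
      field_simp
  | succ n hn ih =>
      have hnR : (0:ℝ) < (n:ℝ) := by exact_mod_cast hn
      have hΓn : Real.Gamma (n:ℝ) ≠ 0 := (Real.Gamma_pos_of_pos hnR).ne'
      have hx : (0:ℝ) < (n:ℝ) + 2*p - 1 := by
        have : (1:ℝ) ≤ (n:ℝ) := by exact_mod_cast hn
        linarith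
      have hsplit : (fun ω => S (n+1) ω) = fun ω => S n ω + σ (n+1) ω := by
        funext ω
        rw [hS, hS, Finset.sum_Icc_succ_top (by omega : 1 ≤ n+1)]
      rw [hsplit, integral_add (hS_int n) (hsig_int (n+1) (by omega)), hrec n hn, ih]
      have hΓsucc : Real.Gamma ((↑(n+1):ℝ) + 2*p - 1)
          = ((n:ℝ) + 2*p - 1) * Real.Gamma ((n:ℝ) + 2*p - 1) := by
        have := Real.Gamma_add_one hx.ne'
        rw [show ((↑(n+1):ℝ) + 2*p - 1) = ((n:ℝ) + 2*p - 1) + 1 by push_cast; ring, this]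
      have hΓn1 : Real.Gamma (↑(n+1):ℝ) = (n:ℝ) * Real.Gamma (n:ℝ) := by
        have := Real.Gamma_add_one hnR.ne'
        rw [show ((↑(n+1):ℝ)) = (n:ℝ) + 1 by push_cast; ring, this]
      rw [hΓsucc, hΓn1]
      field_simp
      ring
end

section
/- For the elephant random walk with p ∈ (0,1), the mean displacement satisfies the asymptotic E[S_n] ~ (2q−1)·n^{2p−1}/Γ(2p) as n → ∞; more precisely, E[S_n]/n^{2p−1} → (2q−1)/Γ(2p). -/
open MeasureTheory Filter

lemma erw_fact (n : ℕ) : (∏ j ∈ Finset.range n, (j+1)) = Nat.factorial n := by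
  induction n with
  | zero => simp
  | succ n ih => rw [Finset.prod_range_succ, ih, Nat.factorial_succ, mul_comm]

lemma erw_aux (s : ℝ) (hs : -1 < s) :
    Tendsto (fun n : ℕ => (∏ k ∈ Finset.Ico 1 n, (((k:ℝ) + s)/k)) / (n:ℝ)^s)
      atTop (nhds (1 / Real.Gamma (s+1))) := by
  have hs1 : (0:ℝ) < s + 1 := by linarith
  have hΓ : Real.Gamma (s+1) ≠ 0 := (Real.Gamma_pos_of_pos hs1).ne'
  rw [← tendsto_add_atTop_iff_nat 2]
  have key : ∀ n : ℕ, 1 ≤ n →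
      (∏ k ∈ Finset.Ico 1 (n+2), (((k:ℝ) + s)/k)) / ((n+2:ℕ):ℝ)^s
      = (((n:ℝ)/(n+2))^s * ((n:ℝ)/(n+1))) / Real.GammaSeq (s+1) n := by
    intro n hn
    have hn0 : (0:ℝ) < (n:ℝ) := by exact_mod_cast hn
    have hn1 : (0:ℝ) < (n:ℝ) + 1 := by positivity
    have hn2 : (0:ℝ) < (n:ℝ) + 2 := by positivity
    have hQ : (0:ℝ) < ∏ j ∈ Finset.range (n+1), (s + 1 + j) := by
      apply Finset.prod_pos; intro j _; positivity
    have hfac : (0:ℝ) < ((Nat.factorial n : ℕ):ℝ) := by exact_mod_cast n.factorial_pos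
    have hprod : ∏ k ∈ Finset.Ico 1 (n+2), (((k:ℝ) + s)/k)
        = (∏ j ∈ Finset.range (n+1), (s + 1 + j)) / ((Nat.factorial (n+1) : ℕ):ℝ) := by
      rw [Finset.prod_div_distrib, Finset.prod_Ico_eq_prod_range,
        Finset.prod_Ico_eq_prod_range]
      congr 1
      · apply Finset.prod_congr rfl; intro j _; push_cast; ring
      · rw [← erw_fact (n+1), Nat.cast_prod]
        apply Finset.prod_congr rfl; intro j _; push_cast; ring
    have hcast2 : (((n+2:ℕ)):ℝ) = (n:ℝ) + 2 := by push_cast; ring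
    have hrpow : ((n:ℝ)/(n+2))^s = (n:ℝ)^s / ((n:ℝ)+2)^s :=
      Real.div_rpow hn0.le hn2.le s
    have hns : (0:ℝ) < (n:ℝ)^s := Real.rpow_pos_of_pos hn0 s
    have hn2s : (0:ℝ) < ((n:ℝ)+2)^s := Real.rpow_pos_of_pos hn2 s
    have hGS : Real.GammaSeq (s+1) n
        = (n:ℝ)^(s+1) * ((Nat.factorial n : ℕ):ℝ) / ∏ j ∈ Finset.range (n+1), (s + 1 + j) := by
      rfl
    have hrpow1 : (n:ℝ)^(s+1) = (n:ℝ)^s * (n:ℝ) := by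
      rw [Real.rpow_add hn0, Real.rpow_one]
    have hfac1 : ((Nat.factorial (n+1) : ℕ):ℝ) = ((n:ℝ)+1) * ((Nat.factorial n : ℕ):ℝ) := by
      rw [Nat.factorial_succ]; push_cast; ring
    rw [hprod, hcast2, hrpow, hGS, hrpow1, hfac1]
    field_simp
  apply Tendsto.congr'
    (f₁ := fun n : ℕ => (((n:ℝ)/(n+2))^s * ((n:ℝ)/(n+1))) / Real.GammaSeq (s+1) n)
  · filter_upwards [eventually_ge_atTop 1] with n hn
    exact (key n hn).symm
  · have h2 : Tendsto (fun n : ℕ => (n:ℝ)/(n+2)) atTop (nhds 1) :=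
      tendsto_natCast_div_add_atTop (2:ℝ)
    have h1 : Tendsto (fun n : ℕ => (n:ℝ)/(n+1)) atTop (nhds 1) :=
      tendsto_natCast_div_add_atTop (1:ℝ)
    have h2s : Tendsto (fun n : ℕ => ((n:ℝ)/(n+2))^s) atTop (nhds 1) := by
      have := (Real.continuousAt_rpow_const 1 s (Or.inl one_ne_zero)).tendsto.comp h2
      simpa [Function.comp_def] using this
    have := ((h2s.mul h1).div (Real.GammaSeq_tendsto_Gamma (s+1)) hΓ)
    simpa [Pi.div_def] using this

/-- ERW mean displacement asymptotics: `E[S_n]/n^{2p-1} → (2q-1)/Γ(2p)`. -/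
theorem erw_mean_asymptotics
    {Ω : Type*} {m0 : MeasurableSpace Ω} (μ : Measure Ω) [IsProbabilityMeasure μ]
    (p q : ℝ) (hp : p ∈ Set.Icc (0:ℝ) 1) (hq : q ∈ Set.Icc (0:ℝ) 1)
    (σ : ℕ → Ω → ℝ) (hσmeas : ∀ k, Measurable (σ k))
    (hval : ∀ k ≥ 1, ∀ᵐ ω ∂μ, σ k ω = 1 ∨ σ k ω = -1)
    (hq1 : μ {ω | σ 1 ω = 1} = ENNReal.ofReal q)
    (F : ℕ → MeasurableSpace Ω)
    (hF : ∀ n, F n = ⨆ k ∈ Set.Icc 1 n, MeasurableSpace.comap (σ k) inferInstance)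
    (S : ℕ → Ω → ℝ) (hS : ∀ n ω, S n ω = ∑ k ∈ Finset.Icc 1 n, σ k ω)
    (hmodel : ∀ n ≥ 1, ∀ s : ℝ, (s = 1 ∨ s = -1) →
      μ[(fun ω => if σ (n+1) ω = s then (1:ℝ) else 0) | F n]
        =ᵐ[μ] fun ω => (n : ℝ)⁻¹ * ∑ k ∈ Finset.Icc 1 n,
          (p * (if σ k ω = s then (1:ℝ) else 0)
            + (1 - p) * (if σ k ω = -s then (1:ℝ) else 0)))
    (hp' : p ∈ Set.Ioo (0:ℝ) 1) :
    Tendsto (fun n : ℕ => (∫ ω, S n ω ∂μ) / (n : ℝ) ^ (2 * p - 1))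
      atTop (nhds ((2 * q - 1) / Real.Gamma (2 * p))) := by
  obtain ⟨hp0, hp1⟩ := hp'
  -- basic measurability / integrability facts
  have hFle : ∀ n, F n ≤ m0 := by
    intro n; rw [hF n]
    exact iSup₂_le fun k _ => measurable_iff_comap_le.mp (hσmeas k)
  have hindmeas : ∀ (k : ℕ) (c : ℝ),
      Measurable fun ω => if σ k ω = c then (1:ℝ) else 0 := fun k c =>
    Measurable.ite (hσmeas k (measurableSet_singleton c)) measurable_const measurable_const
  have hindint : ∀ (k : ℕ) (c : ℝ),
      Integrable (fun ω => if σ k ω = c then (1:ℝ) else 0) μ := fun k c =>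
    (integrable_const (1:ℝ)).mono' (hindmeas k c).aestronglyMeasurable
      (Eventually.of_forall fun ω => by split_ifs <;> simp)
  have hintσ : ∀ k, 1 ≤ k → Integrable (σ k) μ := fun k hk =>
    (integrable_const (1:ℝ)).mono' (hσmeas k).aestronglyMeasurable
      ((hval k hk).mono (by rintro ω (h|h) <;> simp [h]))
  have hSint : ∀ n, Integrable (S n) μ := by
    intro n
    have : S n = fun ω => ∑ k ∈ Finset.Icc 1 n, σ k ω := funext (hS n)
    rw [this]
    exact integrable_finset_sum _ fun k hk => hintσ k (Finset.mem_Icc.mp hk).1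
  have hvalall : ∀ᵐ ω ∂μ, ∀ k, 1 ≤ k → (σ k ω = 1 ∨ σ k ω = -1) := by
    rw [ae_all_iff]
    intro k
    by_cases hk : 1 ≤ k
    · exact (hval k hk).mono fun ω h _ => h
    · exact Eventually.of_forall fun ω h => absurd h hk
  -- σ_k as a difference of indicators, a.e.
  have hσdiff : ∀ k, 1 ≤ k → (σ k) =ᵐ[μ]
      fun ω => (if σ k ω = 1 then (1:ℝ) else 0) - (if σ k ω = -1 then (1:ℝ) else 0) := by
    intro k hk
    filter_upwards [hval k hk] with ω hω
    rcases hω with h | h <;> simp [h] <;> norm_num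
  -- initial value
  have ha1 : (∫ ω, S 1 ω ∂μ) = 2*q - 1 := by
    have hS1 : (∫ ω, S 1 ω ∂μ) = ∫ ω, σ 1 ω ∂μ := by
      apply integral_congr_ae
      exact Eventually.of_forall fun ω => by rw [hS 1 ω]; simp
    have hA : MeasurableSet {ω | σ 1 ω = 1} := hσmeas 1 (measurableSet_singleton 1)
    have hB : MeasurableSet {ω | σ 1 ω = -1} := hσmeas 1 (measurableSet_singleton (-1))
    have hI1 : ∫ ω, (if σ 1 ω = 1 then (1:ℝ) else 0) ∂μ = (μ {ω | σ 1 ω = 1}).toReal := by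
      rw [show (fun ω => if σ 1 ω = 1 then (1:ℝ) else 0)
          = Set.indicator {ω | σ 1 ω = 1} (fun _ => (1:ℝ)) by
        ext ω; by_cases h : σ 1 ω = 1 <;> simp [h, Set.indicator]]
      rw [integral_indicator_const (1:ℝ) hA]
      simp [Measure.real]
    have hI2 : ∫ ω, (if σ 1 ω = -1 then (1:ℝ) else 0) ∂μ = (μ {ω | σ 1 ω = -1}).toReal := by
      rw [show (fun ω => if σ 1 ω = -1 then (1:ℝ) else 0)
          = Set.indicator {ω | σ 1 ω = -1} (fun _ => (1:ℝ)) by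
        ext ω; by_cases h : σ 1 ω = -1 <;> simp [h, Set.indicator]]
      rw [integral_indicator_const (1:ℝ) hB]
      simp [Measure.real]
    have hdisj : Disjoint {ω | σ 1 ω = 1} {ω | σ 1 ω = -1} := by
      rw [Set.disjoint_left]
      intro ω h1 h2
      simp only [Set.mem_setOf_eq] at h1 h2
      rw [h1] at h2; norm_num at h2
    have hcompl : μ ({ω | σ 1 ω = 1} ∪ {ω | σ 1 ω = -1})ᶜ = 0 := by
      have h := ae_iff.mp (hval 1 le_rfl)
      have heq : ({ω | σ 1 ω = 1} ∪ {ω | σ 1 ω = -1})ᶜ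
          = {ω | ¬(σ 1 ω = 1 ∨ σ 1 ω = -1)} := by
        ext ω
        simp only [Set.mem_compl_iff, Set.mem_union, Set.mem_setOf_eq]
      rw [heq]
      exact h
    have hunion : μ ({ω | σ 1 ω = 1} ∪ {ω | σ 1 ω = -1}) = 1 := by
      have h := measure_add_measure_compl (hA.union hB) (μ := μ)
      rw [hcompl, add_zero] at h
      rw [h]; exact measure_univ
    have hsum : μ {ω | σ 1 ω = 1} + μ {ω | σ 1 ω = -1} = 1 := by
      rw [← measure_union hdisj hB, hunion]
    have hq0 : (μ {ω | σ 1 ω = 1}).toReal = q := by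
      rw [hq1, ENNReal.toReal_ofReal hq.1]
    have hqb : (μ {ω | σ 1 ω = -1}).toReal = 1 - q := by
      have hfin1 : μ {ω | σ 1 ω = 1} ≠ ⊤ := measure_ne_top μ _
      have hfin2 : μ {ω | σ 1 ω = -1} ≠ ⊤ := measure_ne_top μ _
      have := congrArg ENNReal.toReal hsum
      rw [ENNReal.toReal_add hfin1 hfin2, hq0] at this
      simp at this; linarith
    rw [hS1, integral_congr_ae (hσdiff 1 le_rfl),
      integral_sub (hindint 1 1) (hindint 1 (-1)), hI1, hI2, hq0, hqb]
    ring
  -- recurrence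
  have hrec : ∀ n, 1 ≤ n → (∫ ω, S (n+1) ω ∂μ) = (∫ ω, S n ω ∂μ) * (((n:ℝ) + (2*p-1))/n) := by
    intro n hn
    have hn0 : ((n:ℝ)) ≠ 0 := by positivity
    -- conditional expectation ⇒ expectation identity
    have hcond : ∀ c : ℝ, (c = 1 ∨ c = -1) →
        ∫ ω, (if σ (n+1) ω = c then (1:ℝ) else 0) ∂μ
        = ∫ ω, (n : ℝ)⁻¹ * ∑ k ∈ Finset.Icc 1 n,
            (p * (if σ k ω = c then (1:ℝ) else 0)
              + (1 - p) * (if σ k ω = -c then (1:ℝ) else 0)) ∂μ := by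
      intro c hc
      rw [← integral_condExp (hFle n)
        (f := fun ω => if σ (n+1) ω = c then (1:ℝ) else 0)]
      exact integral_congr_ae (hmodel n hn c hc)
    have hGint : ∀ c : ℝ, Integrable (fun ω => (n : ℝ)⁻¹ * ∑ k ∈ Finset.Icc 1 n,
        (p * (if σ k ω = c then (1:ℝ) else 0)
          + (1 - p) * (if σ k ω = -c then (1:ℝ) else 0))) μ := by
      intro c
      apply Integrable.const_mul
      apply integrable_finset_sum
      intro k _
      exact ((hindint k c).const_mul p).add ((hindint k (-c)).const_mul (1-p))
    have hstep : ∫ ω, σ (n+1) ω ∂μ = (2*p-1) * ((n:ℝ)⁻¹ * ∫ ω, S n ω ∂μ) := by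
      rw [integral_congr_ae (hσdiff (n+1) (by omega)),
        integral_sub (hindint (n+1) 1) (hindint (n+1) (-1)),
        hcond 1 (Or.inl rfl), hcond (-1) (Or.inr rfl),
        ← integral_sub (hGint 1) (hGint (-1))]
      have hptwise : ∀ᵐ ω ∂μ,
          ((n : ℝ)⁻¹ * ∑ k ∈ Finset.Icc 1 n,
            (p * (if σ k ω = 1 then (1:ℝ) else 0)
              + (1 - p) * (if σ k ω = -1 then (1:ℝ) else 0)))
          - ((n : ℝ)⁻¹ * ∑ k ∈ Finset.Icc 1 n,
            (p * (if σ k ω = -1 then (1:ℝ) else 0)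
              + (1 - p) * (if σ k ω = -(-1) then (1:ℝ) else 0)))
          = (2*p-1) * ((n:ℝ)⁻¹ * S n ω) := by
        filter_upwards [hvalall] with ω hω
        have hterm : ∀ k ∈ Finset.Icc 1 n,
            ((p * (if σ k ω = 1 then (1:ℝ) else 0)
                + (1-p) * (if σ k ω = -1 then (1:ℝ) else 0))
              - (p * (if σ k ω = -1 then (1:ℝ) else 0)
                + (1-p) * (if σ k ω = -(-1) then (1:ℝ) else 0)))
            = (2*p-1) * σ k ω := by
          intro k hk
          rcases hω k (Finset.mem_Icc.mp hk).1 with h | h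
          · rw [h]; norm_num; ring
          · rw [h]; norm_num; ring
        rw [← mul_sub, ← Finset.sum_sub_distrib, Finset.sum_congr rfl hterm,
          ← Finset.mul_sum, ← hS n ω]
        ring
      rw [integral_congr_ae hptwise, integral_const_mul, integral_const_mul]
    have : (∫ ω, S (n+1) ω ∂μ) = (∫ ω, S n ω ∂μ) + ∫ ω, σ (n+1) ω ∂μ := by
      have h1 : (fun ω => S (n+1) ω) = fun ω => S n ω + σ (n+1) ω := by
        funext ω
        rw [hS (n+1) ω, hS n ω, Finset.sum_Icc_succ_top (by omega : 1 ≤ n+1)]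
      simp only [h1]
      rw [integral_add (hSint n) (hintσ (n+1) (by omega))]
    rw [this, hstep]
    field_simp
  -- closed form
  have hclosed : ∀ n, 1 ≤ n →
      (∫ ω, S n ω ∂μ) = (2*q-1) * ∏ k ∈ Finset.Ico 1 n, (((k:ℝ) + (2*p-1))/k) := by
    intro n hn
    induction n, hn using Nat.le_induction with
    | base => simp [ha1]
    | succ n hn ih =>
        rw [hrec n hn, ih, Finset.prod_Ico_succ_top hn]
        ring
  -- conclude
  have hlim := (erw_aux (2*p-1) (by linarith)).const_mul (2*q-1)
  have hΓeq : (2*p-1) + 1 = 2*p := by ring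
  rw [hΓeq, mul_one_div] at hlim
  apply Tendsto.congr' ?_ hlim
  filter_upwards [eventually_ge_atTop 1] with n hn
  rw [hclosed n hn, mul_div_assoc]
end

section
/- For the elephant random walk with 3/4 < p < 1, the martingale M_n = S_n/a_n (with a_n = Γ(n+2p−1)/(Γ(2p)Γ(n))) is bounded in L^2, i.e., sup_n E[M_n^2] < ∞. Consequently M_n converges almost surely and in L^2 to a limit Y, and S_n/n^{2p−1} converges almost surely. -/
open MeasureTheory Filter

lemma aux_bdd_integrable {Ω : Type*} {m0 : MeasurableSpace Ω} (μ : Measure Ω)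
    [IsProbabilityMeasure μ] {g : Ω → ℝ} (hg : AEStronglyMeasurable g μ) {C : ℝ}
    (hb : ∀ᵐ ω ∂μ, |g ω| ≤ C) : Integrable g μ :=
  (integrable_const C).mono' hg (by simpa [Real.norm_eq_abs] using hb)

lemma aux_abs_le_half_one_add_sq (x : ℝ) : |x| ≤ (1 + x^2)/2 := by
  nlinarith [sq_nonneg (|x| - 1), sq_abs x, abs_nonneg x]

set_option maxHeartbeats 1000000 in
/-- For `3/4 < p < 1`, the martingale `M_n = S_n / a_n` is bounded in `L^2`;
consequently it converges a.s. and in `L^2` to a limit `Y`, and `S_n / n^{2p-1}`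
converges almost surely. -/
theorem erw_martingale_L2_bounded
    {Ω : Type*} {m0 : MeasurableSpace Ω} (μ : Measure Ω) [IsProbabilityMeasure μ]
    (p q : ℝ) (hp : p ∈ Set.Icc (0:ℝ) 1) (hq : q ∈ Set.Icc (0:ℝ) 1)
    (σ : ℕ → Ω → ℝ) (hσmeas : ∀ k, Measurable (σ k))
    (hval : ∀ k ≥ 1, ∀ᵐ ω ∂μ, σ k ω = 1 ∨ σ k ω = -1)
    (hq1 : μ {ω | σ 1 ω = 1} = ENNReal.ofReal q)
    (F : ℕ → MeasurableSpace Ω)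
    (hF : ∀ n, F n = ⨆ k ∈ Set.Icc 1 n, MeasurableSpace.comap (σ k) inferInstance)
    (S : ℕ → Ω → ℝ) (hS : ∀ n ω, S n ω = ∑ k ∈ Finset.Icc 1 n, σ k ω)
    (hmodel : ∀ n ≥ 1, ∀ s : ℝ, (s = 1 ∨ s = -1) →
      μ[(fun ω => if σ (n+1) ω = s then (1:ℝ) else 0) | F n]
        =ᵐ[μ] fun ω => (n : ℝ)⁻¹ * ∑ k ∈ Finset.Icc 1 n,
          (p * (if σ k ω = s then (1:ℝ) else 0)
            + (1 - p) * (if σ k ω = -s then (1:ℝ) else 0)))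
    (hp' : p ∈ Set.Ioo (3/4 : ℝ) 1)
    (a : ℕ → ℝ)
    (ha : ∀ n : ℕ, 1 ≤ n →
      a n = Real.Gamma ((n : ℝ) + 2 * p - 1) / (Real.Gamma (2 * p) * Real.Gamma (n : ℝ))) :
    (∃ C : ℝ, ∀ n : ℕ, 1 ≤ n → ∫ ω, (S n ω / a n) ^ 2 ∂μ ≤ C) ∧
    (∃ Y : Ω → ℝ,
      (∀ᵐ ω ∂μ, Tendsto (fun n : ℕ => S n ω / a n) atTop (nhds (Y ω))) ∧
      Tendsto (fun n : ℕ => ∫ ω, (S n ω / a n - Y ω) ^ 2 ∂μ) atTop (nhds 0)) ∧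
    (∀ᵐ ω ∂μ, ∃ l : ℝ,
      Tendsto (fun n : ℕ => S n ω / (n : ℝ) ^ (2 * p - 1)) atTop (nhds l)) := by
  classical
  obtain ⟨hp34, hp1⟩ := hp'
  have hγ0 : (0:ℝ) < 2*p-1 := by linarith
  have hγ1 : 2*p-1 ≤ 1 := by linarith
  -- Gamma / a facts
  have hΓ2p : 0 < Real.Gamma (2 * p) := Real.Gamma_pos_of_pos (by linarith)
  have hapos : ∀ n : ℕ, 1 ≤ n → 0 < a n := by
    intro n hn
    rw [ha n hn]
    have hn1 : (1:ℝ) ≤ (n:ℝ) := by exact_mod_cast hn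
    exact div_pos (Real.Gamma_pos_of_pos (by linarith))
      (mul_pos hΓ2p (Real.Gamma_pos_of_pos (by linarith)))
  have ha1 : a 1 = 1 := by
    rw [ha 1 le_rfl]
    have e : ((1:ℕ):ℝ) + 2*p - 1 = 2*p := by push_cast; ring
    rw [e, Nat.cast_one, Real.Gamma_one, mul_one, div_self hΓ2p.ne']
  have harec : ∀ n : ℕ, 1 ≤ n → a (n+1) = a n * (((n:ℝ) + (2*p-1))/(n:ℝ)) := by
    intro n hn
    have hn0 : (0:ℝ) < (n:ℝ) := by exact_mod_cast Nat.lt_of_lt_of_le Nat.zero_lt_one hn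
    have hx : (0:ℝ) < (n:ℝ) + 2*p - 1 := by linarith
    rw [ha n hn, ha (n+1) (by omega)]
    have e1 : ((n+1:ℕ):ℝ) + 2*p - 1 = ((n:ℝ) + 2*p - 1) + 1 := by push_cast; ring
    have e2 : Real.Gamma ((n+1:ℕ):ℝ) = (n:ℝ) * Real.Gamma (n:ℝ) := by
      push_cast
      rw [Real.Gamma_add_one hn0.ne']
    rw [e1, Real.Gamma_add_one hx.ne', e2]
    have hΓn : Real.Gamma (n:ℝ) ≠ 0 := (Real.Gamma_pos_of_pos hn0).ne'
    have hΓx : Real.Gamma ((n:ℝ) + 2*p - 1) ≠ 0 := (Real.Gamma_pos_of_pos hx).ne'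
    field_simp
    ring
  have hbern : ∀ x : ℝ, 0 < x → (x+1)^(2*p-1) ≤ x^(2*p-1) * (1 + (2*p-1)/x) := by
    intro x hx
    have h1 : x + 1 = x * (1 + 1/x) := by field_simp
    have hinv : (0:ℝ) ≤ 1/x := by positivity
    have h2 : (1 + 1/x)^(2*p-1) ≤ 1 + (2*p-1)*(1/x) :=
      rpow_one_add_le_one_add_mul_self (by linarith) hγ0.le hγ1
    calc (x+1)^(2*p-1) = x^(2*p-1) * (1 + 1/x)^(2*p-1) := by
          rw [h1, Real.mul_rpow hx.le (by positivity)]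
      _ ≤ x^(2*p-1) * (1 + (2*p-1)*(1/x)) := by
          exact mul_le_mul_of_nonneg_left h2 (Real.rpow_nonneg hx.le _)
      _ = x^(2*p-1) * (1 + (2*p-1)/x) := by ring
  have halow : ∀ n : ℕ, 1 ≤ n → ((n:ℝ))^(2*p-1) ≤ a n := by
    intro n hn
    induction n, hn using Nat.le_induction with
    | base => simp [ha1]
    | succ n hn ih =>
      have hn0 : (0:ℝ) < (n:ℝ) := by exact_mod_cast Nat.lt_of_lt_of_le Nat.zero_lt_one hn
      have hfac : (0:ℝ) ≤ 1 + (2*p-1)/(n:ℝ) := by positivity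
      have e : a n * (1 + (2*p-1)/(n:ℝ)) = a (n+1) := by
        rw [harec n hn]; congr 1; field_simp
      calc ((n+1:ℕ):ℝ)^(2*p-1) = ((n:ℝ)+1)^(2*p-1) := by push_cast; ring_nf
        _ ≤ (n:ℝ)^(2*p-1) * (1 + (2*p-1)/(n:ℝ)) := hbern (n:ℝ) hn0
        _ ≤ a n * (1 + (2*p-1)/(n:ℝ)) := mul_le_mul_of_nonneg_right ih hfac
        _ = a (n+1) := e
  have ha_ge1 : ∀ n : ℕ, 1 ≤ n → 1 ≤ a n := by
    intro n hn
    have h1 : (1:ℝ) ≤ (n:ℝ) := by exact_mod_cast hn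
    calc (1:ℝ) = (1:ℝ)^(2*p-1) := (Real.one_rpow _).symm
      _ ≤ ((n:ℝ))^(2*p-1) := Real.rpow_le_rpow (by norm_num) h1 hγ0.le
      _ ≤ a n := halow n hn
  -- Filtration
  have hcomap_le : ∀ n k : ℕ, 1 ≤ k → k ≤ n →
      MeasurableSpace.comap (σ k) inferInstance ≤ F n := by
    intro n k h1 h2
    rw [hF n]
    exact le_biSup (fun k => MeasurableSpace.comap (σ k) inferInstance)
      (Set.mem_Icc.2 ⟨h1, h2⟩)
  set ℱ : Filtration ℕ m0 :=
    { seq := F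
      mono' := by
        intro i j hij
        rw [hF i, hF j]
        exact biSup_mono fun k hk =>
          Set.mem_Icc.2 ⟨(Set.mem_Icc.1 hk).1, le_trans (Set.mem_Icc.1 hk).2 hij⟩
      le' := by
        intro n
        rw [hF n]
        exact iSup₂_le fun k _ => (hσmeas k).comap_le } with hFilt
  have hFle : ∀ n, F n ≤ m0 := fun n => ℱ.le n
  have hFmono : ∀ {i j : ℕ}, i ≤ j → F i ≤ F j := fun {i j} h => ℱ.mono h
  -- measurability
  have hσF : ∀ n k : ℕ, 1 ≤ k → k ≤ n → Measurable[F n] (σ k) := by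
    intro n k h1 h2
    exact measurable_iff_comap_le.2 (hcomap_le n k h1 h2)
  have hSF : ∀ n, Measurable[F n] (S n) := by
    intro n
    have e : S n = fun ω => ∑ k ∈ Finset.Icc 1 n, σ k ω := funext fun ω => hS n ω
    rw [e]
    exact Finset.measurable_sum _ fun k hk =>
      hσF n k (Finset.mem_Icc.1 hk).1 (Finset.mem_Icc.1 hk).2
  have hSmeas : ∀ n, Measurable (S n) := fun n => (hSF n).mono (hFle n) le_rfl
  set M : ℕ → Ω → ℝ := fun n ω => S n ω / a n with hMdef
  have hMF : ∀ n, StronglyMeasurable[F n] (M n) := by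
    intro n
    have e : M n = fun ω => S n ω * (a n)⁻¹ := by
      funext ω; simp only [hMdef, div_eq_mul_inv]
    rw [e]
    exact (hSF n).stronglyMeasurable.mul_const _
  have hMmeas : ∀ n, Measurable (M n) := fun n => (hSmeas n).div_const _
  -- a.e. facts
  have hEall : ∀ᵐ ω ∂μ, ∀ k, 1 ≤ k → (σ k ω = 1 ∨ σ k ω = -1) := by
    rw [ae_all_iff]
    intro k
    by_cases hk : 1 ≤ k
    · filter_upwards [hval k hk] with ω h _
      exact h
    · exact Eventually.of_forall fun ω h => absurd h hk
  have hσbd : ∀ k, 1 ≤ k → ∀ᵐ ω ∂μ, |σ k ω| ≤ 1 := by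
    intro k hk
    filter_upwards [hval k hk] with ω h
    rcases h with h | h <;> simp [h]
  have hSbd : ∀ n : ℕ, ∀ᵐ ω ∂μ, |S n ω| ≤ (n:ℝ) := by
    intro n
    filter_upwards [hEall] with ω h
    rw [hS n ω]
    calc |∑ k ∈ Finset.Icc 1 n, σ k ω| ≤ ∑ k ∈ Finset.Icc 1 n, |σ k ω| :=
          Finset.abs_sum_le_sum_abs _ _
      _ ≤ ∑ _k ∈ Finset.Icc 1 n, (1:ℝ) := Finset.sum_le_sum fun k hk => by
          rcases h k (Finset.mem_Icc.1 hk).1 with h1 | h1 <;> simp [h1]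
      _ = (n:ℝ) := by simp [Nat.card_Icc]
  have hMbd : ∀ n : ℕ, ∀ᵐ ω ∂μ, |M n ω| ≤ (n:ℝ) := by
    intro n
    rcases Nat.eq_zero_or_pos n with rfl | hn
    · refine Eventually.of_forall fun ω => ?_
      have : S 0 ω = 0 := by rw [hS 0 ω]; simp
      simp [hMdef, this]
    · filter_upwards [hSbd n] with ω h
      have h1 : (1:ℝ) ≤ a n := ha_ge1 n hn
      have : |M n ω| = |S n ω| / a n := by
        simp only [hMdef]
        rw [abs_div, abs_of_pos (hapos n hn)]
      rw [this]
      exact (div_le_iff₀ (hapos n hn)).2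
        (le_trans h (le_mul_of_one_le_right (Nat.cast_nonneg n) h1))
  have hMint : ∀ n, Integrable (M n) μ := fun n =>
    aux_bdd_integrable μ (hMmeas n).aestronglyMeasurable (hMbd n)
  have hσint : ∀ k, 1 ≤ k → Integrable (σ k) μ := fun k hk =>
    aux_bdd_integrable μ (hσmeas k).aestronglyMeasurable (hσbd k hk)
  have hSint : ∀ n, Integrable (S n) μ := fun n =>
    aux_bdd_integrable μ (hSmeas n).aestronglyMeasurable (hSbd n)
  have hbint : ∀ (u v : Ω → ℝ), Measurable u → Measurable v → ∀ Cu Cv : ℝ,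
      (∀ᵐ ω ∂μ, |u ω| ≤ Cu) → (∀ᵐ ω ∂μ, |v ω| ≤ Cv) →
      Integrable (fun ω => u ω * v ω) μ := by
    intro u v hu hv Cu Cv hbu hbv
    refine aux_bdd_integrable μ (hu.mul hv).aestronglyMeasurable (C := Cu * Cv) ?_
    filter_upwards [hbu, hbv] with ω h1 h2
    rw [abs_mul]
    exact mul_le_mul h1 h2 (abs_nonneg _) ((abs_nonneg _).trans h1)
  -- conditional expectation facts
  have hindmeas : ∀ (k : ℕ) (s : ℝ), Measurable (fun ω => if σ k ω = s then (1:ℝ) else 0) := by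
    intro k s
    exact Measurable.ite (hσmeas k (measurableSet_singleton s)) measurable_const measurable_const
  have hindint : ∀ (k : ℕ) (s : ℝ), Integrable (fun ω => if σ k ω = s then (1:ℝ) else 0) μ := by
    intro k s
    refine aux_bdd_integrable μ (hindmeas k s).aestronglyMeasurable (C := 1) ?_
    exact Eventually.of_forall fun ω => by split <;> simp
  have hX : ∀ n : ℕ, 1 ≤ n →
      μ[σ (n+1)|F n] =ᵐ[μ] fun ω => ((2*p-1)/(n:ℝ)) * S n ω := by
    intro n hn
    have hn0 : (0:ℝ) < (n:ℝ) := by exact_mod_cast Nat.lt_of_lt_of_le Nat.zero_lt_one hn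
    have h1 := hmodel n hn 1 (Or.inl rfl)
    have h2 := hmodel n hn (-1) (Or.inr rfl)
    have hXd : σ (n+1) =ᵐ[μ] fun ω =>
        (if σ (n+1) ω = 1 then (1:ℝ) else 0) - (if σ (n+1) ω = -1 then (1:ℝ) else 0) := by
      filter_upwards [hval (n+1) (by omega)] with ω h
      rcases h with h | h <;> norm_num [h]
    calc μ[σ (n+1)|F n]
        =ᵐ[μ] μ[fun ω => (if σ (n+1) ω = 1 then (1:ℝ) else 0)
              - (if σ (n+1) ω = -1 then (1:ℝ) else 0)|F n] := condExp_congr_ae hXd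
      _ =ᵐ[μ] μ[fun ω => (if σ (n+1) ω = 1 then (1:ℝ) else 0)|F n]
              - μ[fun ω => (if σ (n+1) ω = -1 then (1:ℝ) else 0)|F n] :=
          condExp_sub (hindint _ _) (hindint _ _) _
      _ =ᵐ[μ] fun ω => ((2*p-1)/(n:ℝ)) * S n ω := by
          filter_upwards [h1, h2, hEall] with ω e1 e2 hω
          simp only [Pi.sub_apply]
          rw [e1, e2, hS n ω, ← mul_sub, ← Finset.sum_sub_distrib]
          rw [show (2*p-1)/(n:ℝ) * (∑ k ∈ Finset.Icc 1 n, σ k ω)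
              = (n:ℝ)⁻¹ * ∑ k ∈ Finset.Icc 1 n, ((2*p-1) * σ k ω) by
            rw [← Finset.mul_sum]; ring]
          congr 1
          refine Finset.sum_congr rfl fun k hk => ?_
          rcases hω k (Finset.mem_Icc.1 hk).1 with h | h <;> rw [h] <;> norm_num <;> ring
  have hM1 : M 1 = σ 1 := by
    funext ω
    simp only [hMdef]
    rw [hS 1 ω, ha1]
    simp
  have hcondM : ∀ n : ℕ, 1 ≤ n → μ[M (n+1)|F n] =ᵐ[μ] M n := by
    intro n hn
    have hn0 : (0:ℝ) < (n:ℝ) := by exact_mod_cast Nat.lt_of_lt_of_le Nat.zero_lt_one hn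
    have hRe : M (n+1) = (a (n+1))⁻¹ • S n + (a (n+1))⁻¹ • σ (n+1) := by
      funext ω
      simp only [hMdef, Pi.add_apply, Pi.smul_apply, smul_eq_mul]
      rw [hS (n+1) ω, Finset.sum_Icc_succ_top (by omega : 1 ≤ n+1), ← hS n ω]
      ring
    rw [hRe]
    calc μ[(a (n+1))⁻¹ • S n + (a (n+1))⁻¹ • σ (n+1)|F n]
        =ᵐ[μ] μ[(a (n+1))⁻¹ • S n|F n] + μ[(a (n+1))⁻¹ • σ (n+1)|F n] :=
          condExp_add ((hSint n).smul _) ((hσint (n+1) (by omega)).smul _) _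
      _ =ᵐ[μ] (a (n+1))⁻¹ • S n + (a (n+1))⁻¹ • μ[σ (n+1)|F n] := by
          refine EventuallyEq.add ?_ (condExp_smul _ _ _)
          rw [condExp_of_stronglyMeasurable (hFle n)
            ((hSF n).stronglyMeasurable.const_smul _) ((hSint n).smul _)]
      _ =ᵐ[μ] M n := by
          filter_upwards [hX n hn] with ω hω
          simp only [Pi.add_apply, Pi.smul_apply, smul_eq_mul, hω, hMdef]
          rw [harec n hn]
          have hne1 : a n ≠ 0 := (hapos n hn).ne'
          have hne2 : (n:ℝ) + (2*p-1) ≠ 0 := by positivity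
          field_simp
  have hXsq : ∀ n : ℕ, 1 ≤ n → ∫ ω, (σ n ω)^2 ∂μ = 1 := by
    intro n hn
    have e : (fun ω => (σ n ω)^2) =ᵐ[μ] fun _ => (1:ℝ) := by
      filter_upwards [hval n hn] with ω h
      rcases h with h | h <;> rw [h] <;> norm_num
    rw [integral_congr_ae e]
    simp
  have hDelta : ∀ n : ℕ, 1 ≤ n → ∀ ω,
      M (n+1) ω - M n ω = (σ (n+1) ω - ((2*p-1)/(n:ℝ)) * S n ω)/a (n+1) := by
    intro n hn ω
    have hn0 : (0:ℝ) < (n:ℝ) := by exact_mod_cast Nat.lt_of_lt_of_le Nat.zero_lt_one hn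
    have hne1 : a n ≠ 0 := (hapos n hn).ne'
    have hne2 : (n:ℝ) + (2*p-1) ≠ 0 := by positivity
    simp only [hMdef]
    rw [hS (n+1) ω, Finset.sum_Icc_succ_top (by omega : 1 ≤ n+1), ← hS n ω, harec n hn]
    field_simp
    ring
  have toolCE : ∀ n : ℕ, 1 ≤ n → ∀ G : Ω → ℝ, StronglyMeasurable[F n] G → ∀ C : ℝ,
      (∀ᵐ ω ∂μ, |G ω| ≤ C) →
      ∫ ω, G ω * σ (n+1) ω ∂μ = ∫ ω, G ω * (((2*p-1)/(n:ℝ)) * S n ω) ∂μ := by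
    intro n hn G hGm C hGb
    have hGmeas : Measurable G := hGm.measurable.mono (hFle n) le_rfl
    have hprod : Integrable (G * σ (n+1)) μ := by
      have := hbint G (σ (n+1)) hGmeas (hσmeas _) C 1 hGb (hσbd (n+1) (by omega))
      exact this
    calc ∫ ω, G ω * σ (n+1) ω ∂μ
        = ∫ ω, (μ[G * σ (n+1)|F n]) ω ∂μ := (integral_condExp (hFle n) (f := G * σ (n+1))).symm
      _ = ∫ ω, G ω * (((2*p-1)/(n:ℝ)) * S n ω) ∂μ := by
          refine integral_congr_ae ?_
          refine EventuallyEq.trans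
            (condExp_mul_of_stronglyMeasurable_left hGm hprod (hσint (n+1) (by omega))) ?_
          filter_upwards [hX n hn] with ω hω
          simp only [Pi.mul_apply]
          rw [hω]
  have hcSbd : ∀ n : ℕ, ∀ᵐ ω ∂μ, |((2*p-1)/(n:ℝ)) * S n ω| ≤ |(2*p-1)/(n:ℝ)| * (n:ℝ) := by
    intro n
    filter_upwards [hSbd n] with ω h
    rw [abs_mul]
    exact mul_le_mul_of_nonneg_left h (abs_nonneg _)
  have claimA : ∀ n : ℕ, 1 ≤ n → ∀ G : Ω → ℝ, StronglyMeasurable[F n] G → ∀ C : ℝ,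
      (∀ᵐ ω ∂μ, |G ω| ≤ C) → ∫ ω, G ω * (M (n+1) ω - M n ω) ∂μ = 0 := by
    intro n hn G hGm C hGb
    have hGmeas : Measurable G := hGm.measurable.mono (hFle n) le_rfl
    have e : ∀ ω, G ω * (M (n+1) ω - M n ω)
        = (a (n+1))⁻¹ * (G ω * σ (n+1) ω - G ω * (((2*p-1)/(n:ℝ)) * S n ω)) := by
      intro ω; rw [hDelta n hn ω]; ring
    simp only [e]
    rw [integral_const_mul,
      integral_sub (hbint G (σ (n+1)) hGmeas (hσmeas _) C 1 hGb (hσbd (n+1) (by omega)))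
        (hbint G (fun ω => ((2*p-1)/(n:ℝ)) * S n ω) hGmeas
          (measurable_const.mul (hSmeas n)) C _ hGb (hcSbd n)),
      toolCE n hn G hGm C hGb, sub_self, mul_zero]
  have claimB : ∀ n : ℕ, 1 ≤ n →
      ∫ ω, (M (n+1) ω - M n ω)^2 ∂μ ≤ ((a (n+1))^2)⁻¹ := by
    intro n hn
    have e : ∀ ω, (M (n+1) ω - M n ω)^2
        = ((a (n+1))^2)⁻¹ * ((σ (n+1) ω)^2
            - 2*((2*p-1)/(n:ℝ))*(S n ω * σ (n+1) ω)
            + ((2*p-1)/(n:ℝ))^2 * (S n ω * S n ω)) := by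
      intro ω; rw [hDelta n hn ω, div_pow]; ring
    have hSX : Integrable (fun ω => S n ω * σ (n+1) ω) μ :=
      hbint _ _ (hSmeas n) (hσmeas _) _ 1 (hSbd n) (hσbd (n+1) (by omega))
    have hSS : Integrable (fun ω => S n ω * S n ω) μ :=
      hbint _ _ (hSmeas n) (hSmeas n) _ _ (hSbd n) (hSbd n)
    have hXX : Integrable (fun ω => (σ (n+1) ω)^2) μ := by
      have := hbint _ _ (hσmeas (n+1)) (hσmeas (n+1)) 1 1
        (hσbd (n+1) (by omega)) (hσbd (n+1) (by omega))
      simpa [pow_two] using this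
    simp only [e]
    rw [integral_const_mul]
    rw [integral_add (by exact hXX.sub (hSX.const_mul _)) (by exact hSS.const_mul _)]
    rw [integral_sub hXX (hSX.const_mul _)]
    rw [integral_const_mul, integral_const_mul]
    rw [hXsq (n+1) (by omega)]
    have hSXeq : ∫ ω, S n ω * σ (n+1) ω ∂μ
        = ((2*p-1)/(n:ℝ)) * ∫ ω, S n ω * S n ω ∂μ := by
      rw [toolCE n hn (S n) (hSF n).stronglyMeasurable (n:ℝ) (hSbd n)]
      rw [← integral_const_mul]
      congr 1
      funext ω
      ring
    rw [hSXeq]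
    have hSSnn : 0 ≤ ∫ ω, S n ω * S n ω ∂μ :=
      integral_nonneg fun ω => mul_self_nonneg _
    have hinv : (0:ℝ) ≤ ((a (n+1))^2)⁻¹ := by positivity
    have hfin : 1 - 2*((2*p-1)/(n:ℝ)) * (((2*p-1)/(n:ℝ)) * ∫ ω, S n ω * S n ω ∂μ)
        + ((2*p-1)/(n:ℝ))^2 * ∫ ω, S n ω * S n ω ∂μ ≤ 1 := by
      nlinarith [sq_nonneg ((2*p-1)/(n:ℝ))]
    calc ((a (n+1))^2)⁻¹ * (1 - 2*((2*p-1)/(n:ℝ)) * (((2*p-1)/(n:ℝ)) * ∫ ω, S n ω * S n ω ∂μ)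
          + ((2*p-1)/(n:ℝ))^2 * ∫ ω, S n ω * S n ω ∂μ)
        ≤ ((a (n+1))^2)⁻¹ * 1 := mul_le_mul_of_nonneg_left hfin hinv
      _ = ((a (n+1))^2)⁻¹ := mul_one _
  have hexp : ∀ u v : Ω → ℝ, Measurable u → Measurable v → ∀ Cu Cv : ℝ,
      (∀ᵐ ω ∂μ, |u ω| ≤ Cu) → (∀ᵐ ω ∂μ, |v ω| ≤ Cv) →
      ∫ ω, (u ω + v ω)^2 ∂μ
        = ∫ ω, (u ω)^2 ∂μ + 2 * ∫ ω, u ω * v ω ∂μ + ∫ ω, (v ω)^2 ∂μ := by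
    intro u v hu hv Cu Cv hbu hbv
    have iuu : Integrable (fun ω => (u ω)^2) μ := by
      simpa [pow_two] using hbint u u hu hu Cu Cu hbu hbu
    have ivv : Integrable (fun ω => (v ω)^2) μ := by
      simpa [pow_two] using hbint v v hv hv Cv Cv hbv hbv
    have iuv : Integrable (fun ω => u ω * v ω) μ := hbint u v hu hv Cu Cv hbu hbv
    have e : ∀ ω, (u ω + v ω)^2 = (u ω)^2 + (2 * (u ω * v ω) + (v ω)^2) := by
      intro ω; ring
    have i3 : Integrable (fun ω => 2 * (u ω * v ω)) μ := by exact iuv.const_mul 2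
    have i2 : Integrable (fun ω => 2 * (u ω * v ω) + (v ω)^2) μ := by exact i3.add ivv
    simp only [e]
    rw [integral_add iuu i2, integral_add i3 ivv, integral_const_mul]
    ring
  have key : ∀ n : ℕ, 1 ≤ n → ∀ G : Ω → ℝ, StronglyMeasurable[F n] G → ∀ C : ℝ,
      (∀ᵐ ω ∂μ, |G ω| ≤ C) → ∀ m : ℕ, n ≤ m →
      ∫ ω, (M m ω - G ω)^2 ∂μ
        ≤ ∫ ω, (M n ω - G ω)^2 ∂μ + ∑ k ∈ Finset.Icc (n+1) m, ((a k)^2)⁻¹ := by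
    intro n hn G hGm C hGb m hm
    induction m, hm using Nat.le_induction with
    | base =>
      rw [Finset.Icc_eq_empty (by omega)]
      simp
    | succ m hm ih =>
      have hm1 : 1 ≤ m := le_trans hn hm
      have hGmeas : Measurable G := hGm.measurable.mono (hFle n) le_rfl
      have hGm' : StronglyMeasurable[F m] (fun ω => M m ω - G ω) :=
        (hMF m).sub (hGm.mono (hFmono hm))
      have hbMG : ∀ᵐ ω ∂μ, |M m ω - G ω| ≤ (m:ℝ) + C := by
        filter_upwards [hMbd m, hGb] with ω h1 h2
        calc |M m ω - G ω| ≤ |M m ω| + |G ω| := abs_sub _ _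
          _ ≤ (m:ℝ) + C := add_le_add h1 h2
      have hbD : ∀ᵐ ω ∂μ, |M (m+1) ω - M m ω| ≤ ((m:ℝ)+1) + (m:ℝ) := by
        filter_upwards [hMbd (m+1), hMbd m] with ω h1 h2
        calc |M (m+1) ω - M m ω| ≤ |M (m+1) ω| + |M m ω| := abs_sub _ _
          _ ≤ ((m:ℝ)+1) + (m:ℝ) := by
            refine add_le_add ?_ h2
            exact_mod_cast h1
      have e : ∀ ω, M (m+1) ω - G ω = (M m ω - G ω) + (M (m+1) ω - M m ω) := by
        intro ω; ring
      have hexp' := hexp (fun ω => M m ω - G ω) (fun ω => M (m+1) ω - M m ω)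
        ((hMmeas m).sub hGmeas) ((hMmeas (m+1)).sub (hMmeas m)) ((m:ℝ) + C) (((m:ℝ)+1) + (m:ℝ))
        hbMG hbD
      have hcross := claimA m hm1 (fun ω => M m ω - G ω) hGm' ((m:ℝ) + C) hbMG
      have hB := claimB m hm1
      rw [Finset.sum_Icc_succ_top (by omega : n+1 ≤ m+1)]
      simp only [e]
      rw [hexp', hcross]
      linarith
  -- summability
  set gg : ℕ → ℝ := fun k => (((k:ℝ))^(4*p-2))⁻¹ with hggdef
  have hggnn : ∀ k, 0 ≤ gg k := fun k => by positivity
  have hggsum : Summable gg := Real.summable_nat_rpow_inv.2 (by linarith)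
  have hterm : ∀ k : ℕ, 1 ≤ k → ((a k)^2)⁻¹ ≤ gg k := by
    intro k hk
    have hk0 : (0:ℝ) < (k:ℝ) := by exact_mod_cast Nat.lt_of_lt_of_le Nat.zero_lt_one hk
    have h1 : ((k:ℝ))^(4*p-2) ≤ (a k)^2 := by
      have h2 : ((k:ℝ))^(4*p-2) = (((k:ℝ))^(2*p-1))^2 := by
        rw [← Real.rpow_natCast (((k:ℝ))^(2*p-1)) 2, ← Real.rpow_mul hk0.le]
        norm_num
        ring_nf
      rw [h2]
      have := halow k hk
      have h3 : (0:ℝ) ≤ ((k:ℝ))^(2*p-1) := Real.rpow_nonneg hk0.le _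
      nlinarith
    have h4 : (0:ℝ) < ((k:ℝ))^(4*p-2) := Real.rpow_pos_of_pos hk0 _
    exact inv_anti₀ h4 h1
  set T : ℝ := ∑' k, gg k with hTdef
  have hsum_le_T : ∀ n₀ m : ℕ, ∑ k ∈ Finset.Icc n₀ m, ((a k)^2)⁻¹ ≤ T → True := fun _ _ _ => trivial
  have hM1sq : ∫ ω, (M 1 ω)^2 ∂μ = 1 := by
    rw [hM1]
    exact hXsq 1 le_rfl
  have hL2bdd : ∀ n : ℕ, 1 ≤ n → ∫ ω, (M n ω)^2 ∂μ ≤ 1 + T := by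
    intro n hn
    have h := key 1 le_rfl (fun _ => 0) stronglyMeasurable_const 0
      (Eventually.of_forall fun ω => by simp) n hn
    simp only [sub_zero] at h
    have hsum : ∑ k ∈ Finset.Icc 2 n, ((a k)^2)⁻¹ ≤ T := by
      refine le_trans (Finset.sum_le_sum fun k hk =>
        hterm k (le_trans one_le_two (Finset.mem_Icc.1 hk).1)) ?_
      exact Summable.sum_le_tsum _ (fun k _ => hggnn k) hggsum
    calc ∫ ω, (M n ω)^2 ∂μ ≤ ∫ ω, (M 1 ω)^2 ∂μ + ∑ k ∈ Finset.Icc 2 n, ((a k)^2)⁻¹ := h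
      _ ≤ 1 + T := by rw [hM1sq]; linarith
  -- the martingale (shifted by one)
  set 𝒢 : Filtration ℕ m0 :=
    { seq := fun n => F (n+1)
      mono' := fun i j hij => hFmono (by omega)
      le' := fun n => hFle (n+1) } with h𝒢def
  have hadp : StronglyAdapted 𝒢 (fun n => M (n+1)) := fun n => hMF (n+1)
  have mart : Martingale (fun n => M (n+1)) 𝒢 μ :=
    martingale_nat hadp (fun n => hMint (n+1)) (fun n => (hcondM (n+1) (by omega)).symm)
  have hT0 : 0 ≤ T := tsum_nonneg hggnn
  set R : NNReal := ((1 + (1 + T))/2).toNNReal with hRdef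
  have hbdd : ∀ n, eLpNorm (M (n+1)) 1 μ ≤ (R : ENNReal) := by
    intro n
    have hint := hMint (n+1)
    have hsq : Integrable (fun ω => (M (n+1) ω)^2) μ := by
      simpa [pow_two] using
        hbint (M (n+1)) (M (n+1)) (hMmeas (n+1)) (hMmeas (n+1)) _ _ (hMbd (n+1)) (hMbd (n+1))
    have h1 : eLpNorm (M (n+1)) 1 μ = ENNReal.ofReal (∫ ω, |M (n+1) ω| ∂μ) := by
      rw [eLpNorm_one_eq_lintegral_enorm,
        ← ofReal_integral_norm_eq_lintegral_enorm hint]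
      simp [Real.norm_eq_abs]
    have h2 : ∫ ω, |M (n+1) ω| ∂μ ≤ (1 + (1 + T))/2 := by
      have hmono : ∫ ω, |M (n+1) ω| ∂μ ≤ ∫ ω, (1 + (M (n+1) ω)^2)/2 ∂μ := by
        refine integral_mono_ae hint.abs (((integrable_const (1:ℝ)).add hsq).div_const 2) ?_
        exact Eventually.of_forall fun ω => aux_abs_le_half_one_add_sq _
      have heq : ∫ ω, (1 + (M (n+1) ω)^2)/2 ∂μ = (1 + ∫ ω, (M (n+1) ω)^2 ∂μ)/2 := by
        rw [integral_div, integral_add (integrable_const 1) hsq]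
        simp
      have := hL2bdd (n+1) (by omega)
      rw [heq] at hmono
      linarith
    rw [h1, hRdef]
    calc ENNReal.ofReal (∫ ω, |M (n+1) ω| ∂μ) ≤ ENNReal.ofReal ((1 + (1 + T))/2) :=
          ENNReal.ofReal_le_ofReal h2
      _ = (((1 + (1 + T))/2).toNNReal : ENNReal) := rfl
  set Y : Ω → ℝ := Filtration.limitProcess (fun n => M (n+1)) 𝒢 μ with hYdef
  have hYsm : StronglyMeasurable[m0] Y := Filtration.stronglyMeasurable_limit_process'
  have hYaesm : AEStronglyMeasurable Y μ := hYsm.aestronglyMeasurable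
  have htendY : ∀ᵐ ω ∂μ, Tendsto (fun n => M (n+1) ω) atTop (nhds (Y ω)) :=
    mart.submartingale.ae_tendsto_limitProcess hbdd
  have hMtend : ∀ᵐ ω ∂μ, Tendsto (fun n => M n ω) atTop (nhds (Y ω)) := by
    filter_upwards [htendY] with ω hω
    exact (tendsto_add_atTop_iff_nat 1).1 hω
  -- L² convergence via Fatou
  set t : ℕ → ℝ := fun n => ∑' k, gg (k + (n+1)) with htdef
  have htnn : ∀ n, 0 ≤ t n := fun n => tsum_nonneg fun k => hggnn _
  have hMdiff : ∀ n : ℕ, 1 ≤ n → ∀ m : ℕ, n ≤ m →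
      ∫ ω, (M n ω - M m ω)^2 ∂μ ≤ t n := by
    intro n hn m hm
    have h := key n hn (M n) (hMF n) (n:ℝ) (hMbd n) m hm
    have h0 : ∫ ω, (M n ω - M n ω)^2 ∂μ = 0 := by simp
    rw [h0, zero_add] at h
    have hflip : (fun ω => (M n ω - M m ω)^2) = fun ω => (M m ω - M n ω)^2 := by
      funext ω; ring
    rw [hflip]
    refine le_trans h ?_
    have hsummable : Summable (fun k => gg (k + (n+1))) := (summable_nat_add_iff (n+1)).2 hggsum
    calc ∑ k ∈ Finset.Icc (n+1) m, ((a k)^2)⁻¹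
        ≤ ∑ k ∈ Finset.Icc (n+1) m, gg k := Finset.sum_le_sum fun k hk =>
          hterm k (by have := (Finset.mem_Icc.1 hk).1; omega)
      _ = ∑ j ∈ Finset.range (m + 1 - (n+1)), gg (j + (n+1)) := by
          rw [← Finset.Ico_add_one_right_eq_Icc, Finset.sum_Ico_eq_sum_range]
          exact Finset.sum_congr rfl fun j _ => by rw [Nat.add_comm]
      _ ≤ t n := Summable.sum_le_tsum _ (fun k _ => hggnn _) hsummable
  have hfatou : ∀ n : ℕ, 1 ≤ n → ∫ ω, (M n ω - Y ω)^2 ∂μ ≤ t n := by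
    intro n hn
    have hmb : ∀ m : ℕ, Measurable fun ω => ENNReal.ofReal ((M n ω - M m ω)^2) := fun m =>
      ENNReal.measurable_ofReal.comp (((hMmeas n).sub (hMmeas m)).pow_const 2)
    have hlim : ∫⁻ ω, ENNReal.ofReal ((M n ω - Y ω)^2) ∂μ ≤ ENNReal.ofReal (t n) := by
      have h1 : ∫⁻ ω, ENNReal.ofReal ((M n ω - Y ω)^2) ∂μ
          = ∫⁻ ω, liminf (fun m => ENNReal.ofReal ((M n ω - M m ω)^2)) atTop ∂μ := by
        refine lintegral_congr_ae ?_
        filter_upwards [hMtend] with ω hω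
        have hcont : Tendsto (fun m => ENNReal.ofReal ((M n ω - M m ω)^2)) atTop
            (nhds (ENNReal.ofReal ((M n ω - Y ω)^2))) :=
          (ENNReal.continuous_ofReal.tendsto _).comp ((tendsto_const_nhds.sub hω).pow 2)
        exact hcont.liminf_eq.symm
      rw [h1]
      refine le_trans (lintegral_liminf_le hmb) ?_
      have h2 : ∀ᶠ m in atTop,
          (∫⁻ ω, ENNReal.ofReal ((M n ω - M m ω)^2) ∂μ) ≤ ENNReal.ofReal (t n) := by
        filter_upwards [eventually_ge_atTop n] with m hm
        have hbMM : ∀ᵐ ω ∂μ, |M n ω - M m ω| ≤ (n:ℝ) + (m:ℝ) := by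
          filter_upwards [hMbd n, hMbd m] with ω e1 e2
          calc |M n ω - M m ω| ≤ |M n ω| + |M m ω| := abs_sub _ _
            _ ≤ (n:ℝ) + (m:ℝ) := add_le_add e1 e2
        have hint : Integrable (fun ω => (M n ω - M m ω)^2) μ := by
          simpa [pow_two] using hbint (fun ω => M n ω - M m ω) (fun ω => M n ω - M m ω)
            ((hMmeas n).sub (hMmeas m)) ((hMmeas n).sub (hMmeas m)) _ _ hbMM hbMM
        rw [← ofReal_integral_eq_lintegral_ofReal hint
          (Eventually.of_forall fun ω => sq_nonneg _)]
        exact ENNReal.ofReal_le_ofReal (hMdiff n hn m hm)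
      calc liminf (fun m => ∫⁻ ω, ENNReal.ofReal ((M n ω - M m ω)^2) ∂μ) atTop
          ≤ liminf (fun _ : ℕ => ENNReal.ofReal (t n)) atTop := liminf_le_liminf h2
        _ = ENNReal.ofReal (t n) := liminf_const _
    have hnnae : 0 ≤ᵐ[μ] fun ω => (M n ω - Y ω)^2 :=
      Eventually.of_forall fun ω => sq_nonneg _
    have haesm : AEStronglyMeasurable (fun ω => (M n ω - Y ω)^2) μ := by
      exact ((hMmeas n).aestronglyMeasurable.sub hYaesm).pow 2
    rw [integral_eq_lintegral_of_nonneg_ae hnnae haesm]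
    exact ENNReal.toReal_le_of_le_ofReal (htnn n) hlim
  have htzero : Tendsto t atTop (nhds 0) := by
    have h := tendsto_sum_nat_add gg
    exact h.comp (tendsto_add_atTop_nat 1)
  have hL2conv : Tendsto (fun n : ℕ => ∫ ω, (M n ω - Y ω)^2 ∂μ) atTop (nhds 0) := by
    refine squeeze_zero' ?_ ?_ htzero
    · exact Eventually.of_forall fun n => integral_nonneg fun ω => sq_nonneg _
    · filter_upwards [eventually_ge_atTop 1] with n hn
      exact hfatou n hn
  -- convergence of a n / n^(2p-1)
  set c : ℕ → ℝ := fun n => a (n+1) / (((n+1:ℕ)):ℝ)^(2*p-1) with hcdef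
  have hcpos : ∀ n, 0 < c n := by
    intro n
    refine div_pos (hapos (n+1) (by omega)) (Real.rpow_pos_of_pos ?_ _)
    exact_mod_cast Nat.succ_pos n
  have hcmono : Monotone c := by
    refine monotone_nat_of_le_succ fun n => ?_
    have hN0 : (0:ℝ) < ((n+1:ℕ):ℝ) := by exact_mod_cast Nat.succ_pos n
    have hd1 : (0:ℝ) < (((n+1:ℕ)):ℝ)^(2*p-1) := Real.rpow_pos_of_pos hN0 _
    have hd2 : (0:ℝ) < (((n+2:ℕ)):ℝ)^(2*p-1) := by
      refine Real.rpow_pos_of_pos ?_ _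
      exact_mod_cast Nat.succ_pos (n+1)
    rw [hcdef]
    rw [div_le_div_iff₀ hd1 hd2]
    have hb := hbern ((n+1:ℕ):ℝ) hN0
    have e : ((n+2:ℕ):ℝ) = ((n+1:ℕ):ℝ) + 1 := by push_cast; ring
    have harec' : a (n+2) = a (n+1) * (1 + (2*p-1)/((n+1:ℕ):ℝ)) := by
      rw [show n+2 = (n+1)+1 by rfl, harec (n+1) (by omega)]
      congr 1
      field_simp
    calc a (n+1) * ((n+1+1:ℕ):ℝ)^(2*p-1)
        = a (n+1) * (((n+1:ℕ):ℝ) + 1)^(2*p-1) := by norm_num [e];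
      _ ≤ a (n+1) * (((n+1:ℕ):ℝ)^(2*p-1) * (1 + (2*p-1)/((n+1:ℕ):ℝ))) :=
          mul_le_mul_of_nonneg_left hb (hapos (n+1) (by omega)).le
      _ = a (n+1+1) * ((n+1:ℕ):ℝ)^(2*p-1) := by
          rw [show n+1+1 = n+2 by rfl, harec']
          ring
  have hcbdd : ∀ n, c n ≤ Real.exp (2*p-1) := by
    have hlogc : ∀ n : ℕ, Real.log (c n)
        = Real.log (a (n+1)) - (2*p-1) * Real.log ((n+1:ℕ):ℝ) := by
      intro n
      have hN0 : (0:ℝ) < ((n+1:ℕ):ℝ) := by exact_mod_cast Nat.succ_pos n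
      rw [hcdef]
      rw [Real.log_div (hapos (n+1) (by omega)).ne' (Real.rpow_pos_of_pos hN0 _).ne',
        Real.log_rpow hN0]
    have hstep : ∀ i : ℕ, Real.log (c (i+1)) - Real.log (c i)
        ≤ (2*p-1) * (1/((i:ℝ)+1) - 1/((i:ℝ)+2)) := by
      intro i
      have hi1 : (0:ℝ) < (i:ℝ)+1 := by positivity
      have hi2 : (0:ℝ) < (i:ℝ)+2 := by positivity
      have hc1 : ((i+1:ℕ):ℝ) = (i:ℝ)+1 := by push_cast; ring
      have hc2 : ((i+1+1:ℕ):ℝ) = (i:ℝ)+2 := by push_cast; ring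
      rw [hlogc, hlogc, hc1, hc2]
      have e1 : Real.log (a (i+1+1)) - Real.log (a (i+1))
          = Real.log (1 + (2*p-1)/((i:ℝ)+1)) := by
        have harec' : a (i+1+1) = a (i+1) * (1 + (2*p-1)/((i:ℝ)+1)) := by
          rw [harec (i+1) (by omega), hc1]
          congr 1
          field_simp
        rw [harec', Real.log_mul (hapos (i+1) (by omega)).ne' (by positivity)]
        ring
      have e2 : Real.log (1 + (2*p-1)/((i:ℝ)+1)) ≤ (2*p-1)/((i:ℝ)+1) := by
        have h := Real.log_le_sub_one_of_pos (x := 1 + (2*p-1)/((i:ℝ)+1)) (by positivity)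
        linarith
      have e3 : (1:ℝ)/((i:ℝ)+2) ≤ Real.log ((i:ℝ)+2) - Real.log ((i:ℝ)+1) := by
        have h := Real.one_sub_inv_le_log_of_pos (x := ((i:ℝ)+2)/((i:ℝ)+1)) (by positivity)
        rw [Real.log_div hi2.ne' hi1.ne'] at h
        have e4 : 1 - (((i:ℝ)+2)/((i:ℝ)+1))⁻¹ = 1/((i:ℝ)+2) := by
          rw [inv_div]
          field_simp
          norm_num
        rw [e4] at h
        exact h
      have e5 : (2*p-1) * (1/((i:ℝ)+2)) ≤ (2*p-1) * (Real.log ((i:ℝ)+2) - Real.log ((i:ℝ)+1)) :=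
        mul_le_mul_of_nonneg_left e3 hγ0.le
      have e6 : (2*p-1)/((i:ℝ)+1) = (2*p-1) * (1/((i:ℝ)+1)) := by ring
      nlinarith [e1, e2, e5]
    intro n
    have h0 : Real.log (c 0) = 0 := by
      have : c 0 = 1 := by
        rw [hcdef]
        norm_num [ha1]
      rw [this, Real.log_one]
    have htel : Real.log (c n) - Real.log (c 0)
        = ∑ i ∈ Finset.range n, (Real.log (c (i+1)) - Real.log (c i)) :=
      (Finset.sum_range_sub (fun i => Real.log (c i)) n).symm
    have hsum : ∑ i ∈ Finset.range n, (Real.log (c (i+1)) - Real.log (c i))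
        ≤ ∑ i ∈ Finset.range n, ((2*p-1) * (1/((i:ℝ)+1) - 1/((i:ℝ)+2))) :=
      Finset.sum_le_sum fun i _ => hstep i
    have htel2 : ∑ i ∈ Finset.range n, ((2*p-1) * (1/((i:ℝ)+1) - 1/((i:ℝ)+2)))
        = (2*p-1) * (1 - 1/((n:ℝ)+1)) := by
      rw [← Finset.mul_sum]
      congr 1
      calc ∑ i ∈ Finset.range n, (1/((i:ℝ)+1) - 1/((i:ℝ)+2))
          = ∑ i ∈ Finset.range n,
              ((fun j : ℕ => -(1/((j:ℝ)+1))) (i+1) - (fun j : ℕ => -(1/((j:ℝ)+1))) i) := by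
            refine Finset.sum_congr rfl fun i _ => ?_
            push_cast
            ring
        _ = -(1/((n:ℝ)+1)) - -(1/(((0:ℕ):ℝ)+1)) := by
            rw [Finset.sum_range_sub (fun j : ℕ => -(1/((j:ℝ)+1))) n]
        _ = 1 - 1/((n:ℝ)+1) := by
            norm_num
            ring
    have hfrac : (0:ℝ) ≤ 1/((n:ℝ)+1) := by positivity
    have hlogbd : Real.log (c n) ≤ 2*p-1 := by
      have h1 : (2*p-1) * (1 - 1/((n:ℝ)+1)) ≤ (2*p-1) := by nlinarith
      have h2 := htel
      rw [h0] at h2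
      linarith [hsum, htel2.le, htel2.ge]
    calc c n = Real.exp (Real.log (c n)) := (Real.exp_log (hcpos n)).symm
      _ ≤ Real.exp (2*p-1) := Real.exp_le_exp.2 hlogbd
  obtain ⟨L, hL⟩ : ∃ L, Tendsto c atTop (nhds L) :=
    ⟨_, tendsto_atTop_ciSup hcmono ⟨Real.exp (2*p-1), by
      rintro x ⟨n, rfl⟩; exact hcbdd n⟩⟩
  have haL : Tendsto (fun n : ℕ => a n / ((n:ℝ))^(2*p-1)) atTop (nhds L) := by
    rw [← tendsto_add_atTop_iff_nat 1]
    exact hL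
  -- assembly
  refine ⟨⟨1 + T, fun n hn => hL2bdd n hn⟩, ⟨Y, hMtend, hL2conv⟩, ?_⟩
  filter_upwards [hMtend] with ω hω
  refine ⟨Y ω * L, ?_⟩
  refine Tendsto.congr' ?_ (hω.mul haL)
  filter_upwards [eventually_ge_atTop 1] with n hn
  have hx : (0:ℝ) < ((n:ℝ))^(2*p-1) :=
    Real.rpow_pos_of_pos (by exact_mod_cast Nat.lt_of_lt_of_le Nat.zero_lt_one hn) _
  show M n ω * (a n / ((n:ℝ))^(2*p-1)) = S n ω / ((n:ℝ))^(2*p-1)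
  simp only [hMdef]
  field_simp
  rw [mul_div_assoc, div_self (hapos n hn).ne', mul_one]
end

section
/- For the elephant random walk with 3/4 < p < 1 and deterministic first step σ_1 = +1, the almost-sure limit Y of S_n/n^{2p−1} satisfies E[Y] = 1/Γ(2p) and E[Y^2] = 1/((4p−3)·Γ(4p−2)). -/
open MeasureTheory Filter

lemma erw_aux_prod_tendsto (c : ℝ) (hc : 0 < c) :
    Tendsto (fun n : ℕ => (∏ k ∈ Finset.range n, (((k:ℝ)+1+c)/((k:ℝ)+1))) / (n:ℝ) ^ c)
      atTop (nhds (1 / Real.Gamma (c+1))) := by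
  have hΓ : Real.Gamma c ≠ 0 := (Real.Gamma_pos_of_pos hc).ne'
  have hlim : Tendsto (fun n : ℕ => 1 / (c * Real.GammaSeq c n)) atTop
      (nhds (1 / (c * Real.Gamma c))) := by
    have := (Real.GammaSeq_tendsto_Gamma c).const_mul c
    exact (tendsto_const_nhds.div this (by positivity)).congr (fun n => rfl)
  have heq : (fun n : ℕ => (∏ k ∈ Finset.range n, (((k:ℝ)+1+c)/((k:ℝ)+1))) / (n:ℝ) ^ c)
      =ᶠ[atTop] (fun n => 1 / (c * Real.GammaSeq c n)) := by
    filter_upwards [eventually_ge_atTop 1] with n hn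
    have hn0 : (0:ℝ) < n := by exact_mod_cast hn
    have hprod : ∏ j ∈ Finset.range (n+1), (c + (j:ℝ))
        = c * ∏ k ∈ Finset.range n, (c + (k:ℝ) + 1) := by
      rw [Finset.prod_range_succ']
      simp only [Nat.cast_zero, add_zero, mul_comm]
      congr 1
      exact Finset.prod_congr rfl (fun k _ => by push_cast; ring)
    have hfact : (∏ k ∈ Finset.range n, ((k:ℝ)+1)) = (Nat.factorial n : ℝ) := by
      clear hn hn0 hprod
      induction n with
      | zero => simp
      | succ m ih => rw [Finset.prod_range_succ, ih]; push_cast [Nat.factorial_succ]; ring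
    have hQ : (∏ k ∈ Finset.range n, (((k:ℝ)+1+c)/((k:ℝ)+1)))
        = (∏ k ∈ Finset.range n, (c + (k:ℝ) + 1)) / (Nat.factorial n : ℝ) := by
      rw [Finset.prod_div_distrib, hfact]
      congr 1
      exact Finset.prod_congr rfl (fun k _ => by ring)
    have hfac0 : (Nat.factorial n : ℝ) ≠ 0 := by exact_mod_cast n.factorial_ne_zero
    have hP0 : (∏ k ∈ Finset.range n, (c + (k:ℝ) + 1)) ≠ 0 := by
      apply Finset.prod_ne_zero_iff.2
      intro k _
      positivity
    have hrp : (0:ℝ) < (n:ℝ) ^ c := Real.rpow_pos_of_pos hn0 c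
    rw [Real.GammaSeq, hprod, hQ]
    field_simp
  rw [show (1:ℝ) / Real.Gamma (c+1) = 1 / (c * Real.Gamma c) by
    rw [Real.Gamma_add_one hc.ne']]
  exact Tendsto.congr' heq.symm hlim

lemma erw_aux_prod_shift (c : ℝ) (hc : 0 < c) :
    Tendsto (fun n : ℕ => (∏ k ∈ Finset.range (n-1), (((k:ℝ)+1+c)/((k:ℝ)+1))) / (n:ℝ) ^ c)
      atTop (nhds (1 / Real.Gamma (c+1))) := by
  set Q : ℕ → ℝ := fun n => ∏ k ∈ Finset.range n, (((k:ℝ)+1+c)/((k:ℝ)+1)) with hQdef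
  have hratio : Tendsto (fun n : ℕ => ((n:ℝ)/((n:ℝ)+1)) ^ c) atTop (nhds 1) := by
    have h1 : Tendsto (fun n : ℕ => (n:ℝ)/((n:ℝ)+1)) atTop (nhds 1) :=
      tendsto_natCast_div_add_atTop (1:ℝ)
    have h2 := (Real.continuousAt_rpow_const 1 c (Or.inl one_ne_zero)).tendsto.comp h1
    simpa [Function.comp_def] using h2
  have hf : Tendsto (fun n : ℕ => Q n / ((n:ℝ)+1) ^ c) atTop (nhds (1 / Real.Gamma (c+1))) := by
    have hmul := (erw_aux_prod_tendsto c hc).mul hratio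
    rw [mul_one] at hmul
    apply hmul.congr'
    filter_upwards [eventually_ge_atTop 1] with n hn
    have hn0 : (0:ℝ) < n := by exact_mod_cast hn
    have hn1 : (0:ℝ) < (n:ℝ)+1 := by positivity
    have hne : ((n:ℝ)) ^ c ≠ 0 := (Real.rpow_pos_of_pos hn0 c).ne'
    rw [Real.div_rpow hn0.le hn1.le, div_mul_div_comm, mul_comm ((n:ℝ) ^ c),
      mul_div_mul_right _ _ hne]
  have hcomp := hf.comp (tendsto_sub_atTop_nat 1)
  apply hcomp.congr'
  filter_upwards [eventually_ge_atTop 1] with n hn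
  have : ((n - 1 : ℕ) : ℝ) + 1 = (n : ℝ) := by
    have : n - 1 + 1 = n := Nat.succ_pred_eq_of_pos hn
    exact_mod_cast congrArg (Nat.cast (R := ℝ)) this
  simp only [Function.comp_apply, this, hQdef]

lemma erw_aux_B_tendsto (b : ℝ) (hb : 1 < b) :
    Tendsto (fun n : ℕ =>
        ((b * ∏ k ∈ Finset.range (n-1), (((k:ℝ)+1+b)/((k:ℝ)+1)) - (n:ℝ)) / (b-1)) / (n:ℝ) ^ b)
      atTop (nhds (1 / ((b-1) * Real.Gamma b))) := by
  have hb0 : 0 < b := by linarith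
  have hb1 : b - 1 ≠ 0 := by linarith
  have hΓ : Real.Gamma b ≠ 0 := (Real.Gamma_pos_of_pos hb0).ne'
  have h1 := (erw_aux_prod_shift b hb0).const_mul b
  have h2 : Tendsto (fun n : ℕ => (n:ℝ) ^ (1-b)) atTop (nhds 0) := by
    have := (tendsto_rpow_neg_atTop (by linarith : (0:ℝ) < b - 1)).comp
      (tendsto_natCast_atTop_atTop (R := ℝ))
    simpa [Function.comp_def, neg_sub] using this
  have h3 := (h1.sub h2).div_const (b-1)
  have hlimeq : (b * (1 / Real.Gamma (b+1)) - 0) / (b-1) = 1 / ((b-1) * Real.Gamma b) := by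
    rw [Real.Gamma_add_one hb0.ne']
    field_simp
    ring
  rw [hlimeq] at h3
  apply h3.congr'
  filter_upwards [eventually_ge_atTop 1] with n hn
  have hn0 : (0:ℝ) < n := by exact_mod_cast hn
  have hx : (0:ℝ) < (n:ℝ) ^ b := Real.rpow_pos_of_pos hn0 b
  have hnb : (n:ℝ) ^ (1-b) = (n:ℝ) / (n:ℝ) ^ b := by
    rw [Real.rpow_sub hn0, Real.rpow_one]
  rw [hnb]
  have key : ∀ x : ℝ, b * (x / (n:ℝ)^b) / (b-1) - (n:ℝ) / (n:ℝ)^b / (b-1)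
      = (b * x - (n:ℝ)) / (b-1) / (n:ℝ)^b := by
    intro x
    have hne : ((n:ℝ)) ^ b ≠ 0 := hx.ne'
    field_simp
  have := key (∏ k ∈ Finset.range (n-1), (((k:ℝ)+1+b)/((k:ℝ)+1)))
  rw [← this]
  ring

lemma erw_aux_cs {Ω : Type*} {m0 : MeasurableSpace Ω} (μ : Measure Ω) [IsProbabilityMeasure μ]
    (f g : Ω → ℝ) (hf : MemLp f 2 μ) (hg : MemLp g 2 μ) :
    |∫ ω, f ω * g ω ∂μ| ≤ Real.sqrt (∫ ω, f ω ^ 2 ∂μ) * Real.sqrt (∫ ω, g ω ^ 2 ∂μ) := by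
  have hpq : (2:ℝ).HolderConjugate 2 := Real.HolderConjugate.two_two
  have h2 : (ENNReal.ofReal (2:ℝ)) = 2 := by
    rw [show (2:ℝ) = ((2:ℕ):ℝ) by norm_num, ENNReal.ofReal_natCast]; norm_num
  have hfa : MemLp (fun ω => |f ω|) (ENNReal.ofReal 2) μ := by
    rw [h2]; simpa [Real.norm_eq_abs] using hf.norm
  have hga : MemLp (fun ω => |g ω|) (ENNReal.ofReal 2) μ := by
    rw [h2]; simpa [Real.norm_eq_abs] using hg.norm
  have hCS := integral_mul_le_Lp_mul_Lq_of_nonneg hpq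
    (Eventually.of_forall (fun ω => abs_nonneg (f ω)))
    (Eventually.of_forall (fun ω => abs_nonneg (g ω))) hfa hga
  have hr2 : ∀ x : ℝ, |x| ^ (2:ℝ) = x ^ 2 := by
    intro x
    rw [show (2:ℝ) = ((2:ℕ):ℝ) by norm_num, Real.rpow_natCast, sq_abs]
  simp only [hr2] at hCS
  have habs : |∫ ω, f ω * g ω ∂μ| ≤ ∫ ω, |f ω| * |g ω| ∂μ := by
    have := norm_integral_le_integral_norm (μ := μ) (f := fun ω => f ω * g ω)
    simpa [Real.norm_eq_abs, abs_mul] using this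
  have hf2 : (0:ℝ) ≤ ∫ ω, f ω ^ 2 ∂μ := integral_nonneg (fun ω => sq_nonneg _)
  have hg2 : (0:ℝ) ≤ ∫ ω, g ω ^ 2 ∂μ := integral_nonneg (fun ω => sq_nonneg _)
  calc |∫ ω, f ω * g ω ∂μ| ≤ ∫ ω, |f ω| * |g ω| ∂μ := habs
    _ ≤ (∫ ω, f ω ^ 2 ∂μ) ^ ((1:ℝ)/2) * (∫ ω, g ω ^ 2 ∂μ) ^ ((1:ℝ)/2) := hCS
    _ = Real.sqrt (∫ ω, f ω ^ 2 ∂μ) * Real.sqrt (∫ ω, g ω ^ 2 ∂μ) := by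
        rw [Real.sqrt_eq_rpow, Real.sqrt_eq_rpow]

/-- For `3/4 < p < 1` and deterministic first step `σ_1 = +1`, the a.s. (and `L^2`)
limit `Y` of `S_n / n^{2p-1}` satisfies `E[Y] = 1/Γ(2p)` and
`E[Y^2] = 1/((4p-3) Γ(4p-2))`. -/
theorem erw_limit_moments
    {Ω : Type*} {m0 : MeasurableSpace Ω} (μ : Measure Ω) [IsProbabilityMeasure μ]
    (p q : ℝ) (hp : p ∈ Set.Icc (0:ℝ) 1) (hq : q ∈ Set.Icc (0:ℝ) 1)
    (σ : ℕ → Ω → ℝ) (hσmeas : ∀ k, Measurable (σ k))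
    (hval : ∀ k ≥ 1, ∀ᵐ ω ∂μ, σ k ω = 1 ∨ σ k ω = -1)
    (hq1 : μ {ω | σ 1 ω = 1} = ENNReal.ofReal q)
    (F : ℕ → MeasurableSpace Ω)
    (hF : ∀ n, F n = ⨆ k ∈ Set.Icc 1 n, MeasurableSpace.comap (σ k) inferInstance)
    (S : ℕ → Ω → ℝ) (hS : ∀ n ω, S n ω = ∑ k ∈ Finset.Icc 1 n, σ k ω)
    (hmodel : ∀ n ≥ 1, ∀ s : ℝ, (s = 1 ∨ s = -1) →
      μ[(fun ω => if σ (n+1) ω = s then (1:ℝ) else 0) | F n]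
        =ᵐ[μ] fun ω => (n : ℝ)⁻¹ * ∑ k ∈ Finset.Icc 1 n,
          (p * (if σ k ω = s then (1:ℝ) else 0)
            + (1 - p) * (if σ k ω = -s then (1:ℝ) else 0)))
    (hp' : p ∈ Set.Ioo (3/4 : ℝ) 1)
    (hfirst : ∀ᵐ ω ∂μ, σ 1 ω = 1)
    (Y : Ω → ℝ) (hYmeas : Measurable Y)
    (hYas : ∀ᵐ ω ∂μ, Tendsto (fun n : ℕ => S n ω / (n : ℝ) ^ (2 * p - 1)) atTop (nhds (Y ω)))
    (hYL2 : Tendsto (fun n : ℕ =>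
      ∫ ω, (S n ω / (n : ℝ) ^ (2 * p - 1) - Y ω) ^ 2 ∂μ) atTop (nhds 0)) :
    ∫ ω, Y ω ∂μ = 1 / Real.Gamma (2 * p) ∧
    ∫ ω, (Y ω) ^ 2 ∂μ = 1 / ((4 * p - 3) * Real.Gamma (4 * p - 2)) := by
  obtain ⟨hp34, hp1⟩ := hp'
  set a : ℝ := 2 * p - 1 with ha_def
  set b : ℝ := 4 * p - 2 with hb_def
  have ha : 0 < a := by simp only [ha_def]; linarith
  have hb : 1 < b := by simp only [hb_def]; linarith
  have hb0 : 0 < b := by linarith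
  have hb1 : b - 1 ≠ 0 := by linarith
  -- σ-algebras
  have hFle : ∀ n, F n ≤ m0 := by
    intro n; rw [hF n]
    exact iSup₂_le fun k _ => (hσmeas k).comap_le
  haveI hsf : ∀ n, SigmaFinite (μ.trim (hFle n)) := fun n => inferInstance
  -- basic integrability
  have hσbd : ∀ k, 1 ≤ k → ∀ᵐ ω ∂μ, ‖σ k ω‖ ≤ 1 := by
    intro k hk
    filter_upwards [hval k hk] with ω h
    rcases h with h | h <;> simp [h]
  have hσint : ∀ k, 1 ≤ k → Integrable (σ k) μ := fun k hk =>
    ⟨(hσmeas k).aestronglyMeasurable, HasFiniteIntegral.of_bounded (hσbd k hk)⟩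
  have hSmeas : ∀ n, Measurable (S n) := by
    intro n
    have : S n = fun ω => ∑ k ∈ Finset.Icc 1 n, σ k ω := funext (hS n)
    rw [this]
    exact Finset.measurable_sum _ fun k _ => hσmeas k
  have hSbd : ∀ n, ∀ᵐ ω ∂μ, ‖S n ω‖ ≤ (n:ℝ) := by
    intro n
    have hall : ∀ᵐ ω ∂μ, ∀ k ∈ Finset.Icc 1 n, σ k ω = 1 ∨ σ k ω = -1 :=
      (Filter.eventually_all_finset _).2 fun k hk => hval k (Finset.mem_Icc.mp hk).1
    filter_upwards [hall] with ω h
    rw [hS]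
    calc ‖∑ k ∈ Finset.Icc 1 n, σ k ω‖ ≤ ∑ k ∈ Finset.Icc 1 n, ‖σ k ω‖ :=
          norm_sum_le _ _
      _ ≤ ∑ _k ∈ Finset.Icc 1 n, (1:ℝ) := by
          apply Finset.sum_le_sum
          intro k hk
          rcases h k hk with h' | h' <;> simp [h']
      _ = (n:ℝ) := by simp [Nat.card_Icc]
  have hSint : ∀ n, Integrable (S n) μ := fun n =>
    ⟨(hSmeas n).aestronglyMeasurable, HasFiniteIntegral.of_bounded (hSbd n)⟩
  have hS2int : ∀ n, Integrable (fun ω => (S n ω) ^ 2) μ := by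
    intro n
    refine ⟨((hSmeas n).pow_const 2).aestronglyMeasurable,
      HasFiniteIntegral.of_bounded (C := (n:ℝ)^2) ?_⟩
    filter_upwards [hSbd n] with ω h
    rw [Real.norm_eq_abs, abs_pow]
    exact pow_le_pow_left₀ (abs_nonneg _) (by rwa [Real.norm_eq_abs] at h) 2
  have hindmeas : ∀ m : ℕ, ∀ s : ℝ, Measurable (fun ω => if σ m ω = s then (1:ℝ) else 0) := by
    intro m s
    exact Measurable.ite (measurableSet_eq_fun (hσmeas m) measurable_const)
      measurable_const measurable_const
  have hindint : ∀ m : ℕ, ∀ s : ℝ, Integrable (fun ω => if σ m ω = s then (1:ℝ) else 0) μ := by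
    intro m s
    refine ⟨(hindmeas m s).aestronglyMeasurable,
      HasFiniteIntegral.of_bounded (C := 1) (Eventually.of_forall fun ω => ?_)⟩
    split <;> simp
  -- the conditional expectation of σ (n+1)
  have hcond : ∀ n, 1 ≤ n →
      μ[σ (n+1) | F n] =ᵐ[μ] fun ω => ((2*p-1) / n) * S n ω := by
    intro n hn
    have h1 := hmodel n hn 1 (Or.inl rfl)
    have h2 := hmodel n hn (-1) (Or.inr rfl)
    have hdec : σ (n+1) =ᵐ[μ] fun ω =>
        (if σ (n+1) ω = 1 then (1:ℝ) else 0) - (if σ (n+1) ω = -1 then (1:ℝ) else 0) := by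
      filter_upwards [hval (n+1) (by omega)] with ω h
      rcases h with h | h <;> norm_num [h]
    have hsplit : μ[σ (n+1) | F n] =ᵐ[μ]
        μ[(fun ω => if σ (n+1) ω = 1 then (1:ℝ) else 0) | F n]
          - μ[(fun ω => if σ (n+1) ω = -1 then (1:ℝ) else 0) | F n] :=
      (condExp_congr_ae hdec).trans (condExp_sub (hindint _ _) (hindint _ _) (F n))
    have hvals : ∀ᵐ ω ∂μ, ∀ k ∈ Finset.Icc 1 n, (σ k ω = 1 ∨ σ k ω = -1) :=
      (Filter.eventually_all_finset _).2 fun k hk => hval k (Finset.mem_Icc.mp hk).1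
    filter_upwards [hsplit, h1, h2, hvals] with ω hω ha1 ha2 hv
    rw [hω, Pi.sub_apply, ha1, ha2, hS]
    rw [← mul_sub, ← Finset.sum_sub_distrib]
    have hterm : ∀ k ∈ Finset.Icc 1 n,
        ((p * (if σ k ω = 1 then (1:ℝ) else 0) + (1-p) * (if σ k ω = -(1:ℝ) then (1:ℝ) else 0))
          - (p * (if σ k ω = -1 then (1:ℝ) else 0)
            + (1-p) * (if σ k ω = -(-1:ℝ) then (1:ℝ) else 0)))
        = (2*p-1) * σ k ω := by
      intro k hk
      rcases hv k hk with h' | h' <;> norm_num [h'] <;> ring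
    rw [Finset.sum_congr rfl hterm, ← Finset.mul_sum]
    rw [div_eq_mul_inv]
    ring
  -- recurrences
  set A : ℕ → ℝ := fun n => ∫ ω, S n ω ∂μ with hA_def
  set B : ℕ → ℝ := fun n => ∫ ω, (S n ω) ^ 2 ∂μ with hB_def
  have hSsucc : ∀ n : ℕ, ∀ ω, S (n+1) ω = S n ω + σ (n+1) ω := by
    intro n ω
    rw [hS, hS, ← Finset.sum_Icc_succ_top (by omega : 1 ≤ n+1)]
  have recA : ∀ n, 1 ≤ n → A (n+1) = (1 + (2*p-1)/n) * A n := by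
    intro n hn
    have e1 : A (n+1) = A n + ∫ ω, σ (n+1) ω ∂μ := by
      simp only [hA_def]
      rw [← integral_add (hSint n) (hσint (n+1) (by omega))]
      apply integral_congr_ae
      filter_upwards with ω
      exact hSsucc n ω
    have e2 : ∫ ω, σ (n+1) ω ∂μ = ((2*p-1)/n) * A n := by
      have := integral_condExp (hFle n) (μ := μ) (f := σ (n+1))
      rw [← this, integral_congr_ae (hcond n hn), integral_const_mul]
    rw [e1, e2]; ring
  have hcross : ∀ n, 1 ≤ n → Integrable (fun ω => S n ω * σ (n+1) ω) μ := by
    intro n hn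
    refine ⟨((hSmeas n).mul (hσmeas (n+1))).aestronglyMeasurable,
      HasFiniteIntegral.of_bounded (C := (n:ℝ)) ?_⟩
    filter_upwards [hSbd n, hσbd (n+1) (by omega)] with ω h1 h2
    calc ‖S n ω * σ (n+1) ω‖ = ‖S n ω‖ * ‖σ (n+1) ω‖ := norm_mul _ _
      _ ≤ (n:ℝ) * 1 := mul_le_mul h1 h2 (norm_nonneg _) (Nat.cast_nonneg n)
      _ = (n:ℝ) := mul_one _
  have hSF : ∀ n, StronglyMeasurable[F n] (S n) := by
    intro n
    have hmk : ∀ k ∈ Finset.Icc 1 n, Measurable[F n] (σ k) := by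
      intro k hk
      have hle : MeasurableSpace.comap (σ k) inferInstance ≤ F n := by
        rw [hF n]
        exact le_iSup₂ (f := fun k (_ : k ∈ Set.Icc 1 n) =>
          MeasurableSpace.comap (σ k) inferInstance) k (by simpa using Finset.mem_Icc.mp hk)
      exact measurable_iff_comap_le.2 hle
    have : Measurable[F n] (S n) := by
      have : S n = fun ω => ∑ k ∈ Finset.Icc 1 n, σ k ω := funext (hS n)
      rw [this]
      exact Finset.measurable_sum _ hmk
    exact this.stronglyMeasurable
  have recB : ∀ n, 1 ≤ n → B (n+1) = (1 + b/n) * B n + 1 := by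
    intro n hn
    have hσ2int : Integrable (fun ω => (σ (n+1) ω)^2) μ := by
      refine ⟨((hσmeas (n+1)).pow_const 2).aestronglyMeasurable,
        HasFiniteIntegral.of_bounded (C := 1) ?_⟩
      filter_upwards [hσbd (n+1) (by omega)] with ω h
      rw [Real.norm_eq_abs, abs_pow]
      calc |σ (n+1) ω| ^ 2 ≤ 1 ^ 2 := by
            apply pow_le_pow_left₀ (abs_nonneg _) (by rwa [Real.norm_eq_abs] at h)
        _ = 1 := one_pow 2
    have e0 : B (n+1) = B n + (2 * ∫ ω, S n ω * σ (n+1) ω ∂μ + ∫ ω, (σ (n+1) ω)^2 ∂μ) := by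
      have hsum : (Integrable (fun ω => 2 * (S n ω * σ (n+1) ω) + (σ (n+1) ω)^2) μ) :=
        ((hcross n hn).const_mul 2).add hσ2int
      calc B (n+1)
          = ∫ ω, ((S n ω)^2 + (2 * (S n ω * σ (n+1) ω) + (σ (n+1) ω)^2)) ∂μ := by
            simp only [hB_def]
            apply integral_congr_ae
            filter_upwards with ω
            rw [hSsucc n ω]; ring
        _ = B n + ∫ ω, (2 * (S n ω * σ (n+1) ω) + (σ (n+1) ω)^2) ∂μ := by
            simp only [hB_def]
            rw [integral_add (hS2int n) hsum]
        _ = B n + (2 * ∫ ω, S n ω * σ (n+1) ω ∂μ + ∫ ω, (σ (n+1) ω)^2 ∂μ) := by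
            rw [integral_add ((hcross n hn).const_mul 2) hσ2int, integral_const_mul]
    have e1 : ∫ ω, (σ (n+1) ω)^2 ∂μ = 1 := by
      have hae : (fun ω => (σ (n+1) ω)^2) =ᵐ[μ] fun _ => (1:ℝ) := by
        filter_upwards [hval (n+1) (by omega)] with ω h
        rcases h with h | h <;> rw [h] <;> norm_num
      rw [integral_congr_ae hae]
      simp
    have e2 : ∫ ω, S n ω * σ (n+1) ω ∂μ = ((2*p-1)/n) * B n := by
      have hpull : μ[(fun ω => S n ω * σ (n+1) ω) | F n]
          =ᵐ[μ] (S n) * μ[σ (n+1) | F n] :=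
        condExp_mul_of_stronglyMeasurable_left (hSF n) (hcross n hn) (hσint (n+1) (by omega))
      have h3 : (S n) * μ[σ (n+1) | F n] =ᵐ[μ] fun ω => ((2*p-1)/n) * (S n ω)^2 := by
        filter_upwards [hcond n hn] with ω hω
        rw [Pi.mul_apply, hω]; ring
      have := integral_condExp (hFle n) (μ := μ) (f := fun ω => S n ω * σ (n+1) ω)
      rw [← this, integral_congr_ae (hpull.trans h3), integral_const_mul]
    have hbeq : 2 * ((2*p-1)/n) = b / n := by
      rw [hb_def]; ring
    rw [e0, e1, e2]
    field_simp
    ring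
  have hA1 : A 1 = 1 := by
    have h1 : ∀ ω, S 1 ω = σ 1 ω := by intro ω; rw [hS]; simp
    have : A 1 = ∫ ω, σ 1 ω ∂μ := by
      simp only [hA_def]; exact integral_congr_ae (Eventually.of_forall h1)
    rw [this, integral_congr_ae (hfirst.mono fun ω h => h)]
    simp
  have hB1 : B 1 = 1 := by
    have h1 : ∀ ω, S 1 ω = σ 1 ω := by intro ω; rw [hS]; simp
    have : B 1 = ∫ ω, (σ 1 ω)^2 ∂μ := by
      simp only [hB_def]
      apply integral_congr_ae
      filter_upwards with ω
      rw [h1 ω]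
    rw [this, integral_congr_ae (μ := μ) (g := fun _ => (1:ℝ)) (hfirst.mono fun ω h => by rw [h]; norm_num)]
    simp
  -- closed forms
  set Qf : ℝ → ℕ → ℝ := fun c m => ∏ k ∈ Finset.range m, (((k:ℝ)+1+c)/((k:ℝ)+1)) with hQf_def
  have hAcf : ∀ m : ℕ, A (m+1) = Qf a m := by
    intro m
    induction m with
    | zero => simpa [hQf_def] using hA1
    | succ m ih =>
      have hm1 : ((m:ℝ)+1) ≠ 0 := by positivity
      rw [recA (m+1) (by omega), ih]
      simp only [hQf_def]
      rw [Finset.prod_range_succ]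
      push_cast
      field_simp
      ring
  have hBcf : ∀ m : ℕ, B (m+1) = (b * Qf b m - ((m:ℝ)+1)) / (b-1) := by
    intro m
    induction m with
    | zero => simp only [hQf_def]; rw [hB1]; simp; field_simp
    | succ m ih =>
      have hm1 : ((m:ℝ)+1) ≠ 0 := by positivity
      rw [recB (m+1) (by omega), ih]
      simp only [hQf_def]
      rw [Finset.prod_range_succ]
      push_cast
      field_simp
      ring
  -- limits of normalized moments
  have hAlim : Tendsto (fun n : ℕ => A n / (n:ℝ) ^ a) atTop (nhds (1 / Real.Gamma (a+1))) := by
    apply (erw_aux_prod_shift a ha).congr'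
    filter_upwards [eventually_ge_atTop 1] with n hn
    have : A n = Qf a (n-1) := by
      have := hAcf (n-1)
      rwa [Nat.sub_add_cancel hn] at this
    rw [this]
  have hBlim : Tendsto (fun n : ℕ => B n / (n:ℝ) ^ b) atTop
      (nhds (1 / ((b-1) * Real.Gamma b))) := by
    apply (erw_aux_B_tendsto b hb).congr'
    filter_upwards [eventually_ge_atTop 1] with n hn
    have h1 : B n = (b * Qf b (n-1) - ((((n-1):ℕ):ℝ)+1)) / (b-1) := by
      have := hBcf (n-1)
      rwa [Nat.sub_add_cancel hn] at this
    have h2 : ((((n-1):ℕ):ℝ)+1) = (n:ℝ) := by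
      have : n - 1 + 1 = n := Nat.succ_pred_eq_of_pos hn
      exact_mod_cast congrArg (Nat.cast (R := ℝ)) this
    rw [h1, h2]
  -- normalized variables
  set X : ℕ → Ω → ℝ := fun n ω => S n ω / (n:ℝ) ^ (2*p-1) with hX_def
  have hXmeas : ∀ n, Measurable (X n) := fun n => (hSmeas n).div_const _
  have hXmem : ∀ n, MemLp (X n) 2 μ := by
    intro n
    refine (memLp_top_of_bound (hXmeas n).aestronglyMeasurable ((n:ℝ) / (n:ℝ)^a) ?_).mono_exponent le_top
    filter_upwards [hSbd n] with ω h
    simp only [hX_def]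
    rw [Real.norm_eq_abs, abs_div, abs_of_nonneg (Real.rpow_nonneg (Nat.cast_nonneg n) _)]
    rcases Nat.eq_zero_or_pos n with rfl | hn
    · simp [hS]
    · have hpos : (0:ℝ) < (n:ℝ) ^ a := Real.rpow_pos_of_pos (by exact_mod_cast hn) _
      gcongr
      rwa [Real.norm_eq_abs] at h
  have hXint : ∀ n, ∫ ω, X n ω ∂μ = A n / (n:ℝ)^a := by
    intro n
    simp only [hX_def, hA_def]
    rw [integral_div]
  have hX2eq : ∀ n, ∫ ω, (X n ω)^2 ∂μ = B n / (n:ℝ)^b := by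
    intro n
    have hsq : ∀ ω, (X n ω)^2 = (S n ω)^2 / (n:ℝ)^b := by
      intro ω
      simp only [hX_def]
      rw [div_pow, ← Real.rpow_natCast ((n:ℝ) ^ (2*p-1)) 2, ← Real.rpow_mul (Nat.cast_nonneg n)]
      norm_num
      congr 1
      simp only [hb_def]; ring
    simp only [hB_def]
    rw [integral_congr_ae (Eventually.of_forall hsq), integral_div]
  -- limits of integrals of X
  have hIXlim : Tendsto (fun n => ∫ ω, X n ω ∂μ) atTop (nhds (1 / Real.Gamma (2*p))) := by
    have he : a + 1 = 2*p := by rw [ha_def]; ring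
    rw [← he]
    exact hAlim.congr (fun n => (hXint n).symm)
  have hIX2lim : Tendsto (fun n => ∫ ω, (X n ω)^2 ∂μ) atTop
      (nhds (1 / ((4*p-3) * Real.Gamma (4*p-2)))) := by
    have h1 : b - 1 = 4*p-3 := by rw [hb_def]; ring
    have h2 : b = 4*p-2 := hb_def
    rw [← h1, ← h2]
    exact hBlim.congr (fun n => (hX2eq n).symm)
  obtain ⟨C, hC⟩ : ∃ C, ∀ n, ∫ ω, (X n ω)^2 ∂μ ≤ C := by
    obtain ⟨C, hC⟩ := hIX2lim.bddAbove_range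
    exact ⟨C, fun n => hC ⟨n, rfl⟩⟩
  have hX2int : ∀ n, Integrable (fun ω => (X n ω)^2) μ := fun n => (hXmem n).integrable_sq
  have hX2nonneg : ∀ n : ℕ, 0 ≤ᵐ[μ] fun ω => (X n ω)^2 :=
    fun n => Eventually.of_forall fun ω => sq_nonneg _
  -- Y is square integrable (Fatou)
  have hY2int : Integrable (fun ω => (Y ω)^2) μ := by
    refine ⟨(hYmeas.pow_const 2).aestronglyMeasurable, ?_⟩
    have key : ∫⁻ ω, ENNReal.ofReal ((Y ω)^2) ∂μ ≤ ENNReal.ofReal C := by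
      have hae : ∀ᵐ ω ∂μ, ENNReal.ofReal ((Y ω)^2)
          = Filter.liminf (fun n => ENNReal.ofReal ((X n ω)^2)) atTop := by
        filter_upwards [hYas] with ω h
        have h2 : Tendsto (fun n => ENNReal.ofReal ((X n ω)^2)) atTop
            (nhds (ENNReal.ofReal ((Y ω)^2))) :=
          (ENNReal.continuous_ofReal.tendsto _).comp (h.pow 2)
        exact h2.liminf_eq.symm
      calc ∫⁻ ω, ENNReal.ofReal ((Y ω)^2) ∂μ
          = ∫⁻ ω, Filter.liminf (fun n => ENNReal.ofReal ((X n ω)^2)) atTop ∂μ :=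
            lintegral_congr_ae hae
        _ ≤ Filter.liminf (fun n => ∫⁻ ω, ENNReal.ofReal ((X n ω)^2) ∂μ) atTop :=
            lintegral_liminf_le (fun n => ((hXmeas n).pow_const 2).ennreal_ofReal)
        _ ≤ ENNReal.ofReal C := by
            have hle : ∀ n : ℕ, ∫⁻ ω, ENNReal.ofReal ((X n ω)^2) ∂μ ≤ ENNReal.ofReal C := by
              intro n
              rw [← ofReal_integral_eq_lintegral_ofReal (hX2int n) (hX2nonneg n)]
              exact ENNReal.ofReal_le_ofReal (hC n)
            calc Filter.liminf (fun n => ∫⁻ ω, ENNReal.ofReal ((X n ω)^2) ∂μ) atTop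
                ≤ Filter.liminf (fun _ : ℕ => ENNReal.ofReal C) atTop :=
                  Filter.liminf_le_liminf (Eventually.of_forall hle)
              _ = ENNReal.ofReal C := Filter.liminf_const _
    rw [hasFiniteIntegral_iff_ofReal (Eventually.of_forall fun ω => sq_nonneg _)]
    exact lt_of_le_of_lt key ENNReal.ofReal_lt_top
  have hYmem : MemLp Y 2 μ := (memLp_two_iff_integrable_sq hYmeas.aestronglyMeasurable).2 hY2int
  have hYint : Integrable Y μ := hYmem.integrable one_le_two
  have hXint' : ∀ n, Integrable (X n) μ := fun n => (hXmem n).integrable one_le_two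
  have hεlim : Tendsto (fun n => Real.sqrt (∫ ω, (X n ω - Y ω)^2 ∂μ)) atTop (nhds 0) := by
    have h0 : Tendsto (fun n : ℕ => ∫ ω, (X n ω - Y ω)^2 ∂μ) atTop (nhds 0) := hYL2
    have := (Real.continuous_sqrt.tendsto 0).comp h0
    simpa [Function.comp_def] using this
  have est1 : ∀ n, |(∫ ω, X n ω ∂μ) - ∫ ω, Y ω ∂μ|
      ≤ Real.sqrt (∫ ω, (X n ω - Y ω)^2 ∂μ) := by
    intro n
    have hcs := erw_aux_cs μ (fun ω => X n ω - Y ω) (fun _ => 1)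
      ((hXmem n).sub hYmem) (memLp_const 1)
    simp only [mul_one, one_pow] at hcs
    have h1 : ∫ (_ : Ω), (1:ℝ) ∂μ = 1 := by simp
    rw [h1, Real.sqrt_one, mul_one] at hcs
    rwa [integral_sub (hXint' n) hYint] at hcs
  have hsum2 : ∀ n, ∫ ω, (X n ω + Y ω)^2 ∂μ ≤ 2*C + 2*(∫ ω, (Y ω)^2 ∂μ) := by
    intro n
    have hpt : ∀ ω, (X n ω + Y ω)^2 ≤ 2*(X n ω)^2 + 2*(Y ω)^2 := by
      intro ω; nlinarith [sq_nonneg (X n ω - Y ω)]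
    calc ∫ ω, (X n ω + Y ω)^2 ∂μ ≤ ∫ ω, (2*(X n ω)^2 + 2*(Y ω)^2) ∂μ :=
          integral_mono (((hXmem n).add hYmem).integrable_sq)
            (((hX2int n).const_mul 2).add (hY2int.const_mul 2)) hpt
      _ = 2*(∫ ω, (X n ω)^2 ∂μ) + 2*(∫ ω, (Y ω)^2 ∂μ) := by
          rw [integral_add ((hX2int n).const_mul 2) (hY2int.const_mul 2),
            integral_const_mul, integral_const_mul]
      _ ≤ 2*C + 2*(∫ ω, (Y ω)^2 ∂μ) := by have := hC n; linarith
  have est2 : ∀ n, |(∫ ω, (X n ω)^2 ∂μ) - ∫ ω, (Y ω)^2 ∂μ|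
      ≤ Real.sqrt (∫ ω, (X n ω - Y ω)^2 ∂μ)
        * Real.sqrt (2*C + 2*(∫ ω, (Y ω)^2 ∂μ)) := by
    intro n
    have hcs := erw_aux_cs μ (fun ω => X n ω - Y ω) (fun ω => X n ω + Y ω)
      ((hXmem n).sub hYmem) ((hXmem n).add hYmem)
    have hid : ∫ ω, (X n ω - Y ω) * (X n ω + Y ω) ∂μ
        = (∫ ω, (X n ω)^2 ∂μ) - ∫ ω, (Y ω)^2 ∂μ := by
      rw [← integral_sub (hX2int n) hY2int]
      apply integral_congr_ae; filter_upwards with ω; ring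
    rw [hid] at hcs
    exact hcs.trans (mul_le_mul_of_nonneg_left (Real.sqrt_le_sqrt (hsum2 n)) (Real.sqrt_nonneg _))
  have hconv1 : Tendsto (fun n => ∫ ω, X n ω ∂μ) atTop (nhds (∫ ω, Y ω ∂μ)) := by
    have h0 : Tendsto (fun n => (∫ ω, X n ω ∂μ) - ∫ ω, Y ω ∂μ) atTop (nhds 0) :=
      squeeze_zero_norm (fun n => by simpa [Real.norm_eq_abs] using est1 n) hεlim
    have := h0.add (tendsto_const_nhds (x := ∫ ω, Y ω ∂μ))
    simpa using this
  have hconv2 : Tendsto (fun n => ∫ ω, (X n ω)^2 ∂μ) atTop (nhds (∫ ω, (Y ω)^2 ∂μ)) := by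
    have hrhs : Tendsto (fun n => Real.sqrt (∫ ω, (X n ω - Y ω)^2 ∂μ)
        * Real.sqrt (2*C + 2*(∫ ω, (Y ω)^2 ∂μ))) atTop (nhds 0) := by
      simpa using hεlim.mul_const _
    have h0 : Tendsto (fun n => (∫ ω, (X n ω)^2 ∂μ) - ∫ ω, (Y ω)^2 ∂μ) atTop (nhds 0) :=
      squeeze_zero_norm (fun n => by simpa [Real.norm_eq_abs] using est2 n) hrhs
    have := h0.add (tendsto_const_nhds (x := ∫ ω, (Y ω)^2 ∂μ))
    simpa using this
  exact ⟨tendsto_nhds_unique hconv1 hIXlim, tendsto_nhds_unique hconv2 hIX2lim⟩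
end

section
/- Consider the two-color urn process (X_n^1, X_n^2) with initial composition X_1 = ξ ∈ {(1,0),(0,1)} in which at each step a ball is drawn uniformly at random, returned, and a ball of the same color is added with probability p, of the opposite color with probability 1−p. Then the process (X_n^1 − X_n^2, n ≥ 1) has the same law as the elephant random walk (S_n, n ≥ 1) with memory parameter p and first step S_1 = ξ^1 − ξ^2. -/
open MeasureTheory Filter


/-- black-ball count trajectory determined by initial `x` and sign sequence `e`. -/
def erwBt (x : ℕ) (e : ℕ → Bool) (n : ℕ) : ℕ :=
  x + ∑ k ∈ Finset.Icc 1 (n-1), (if e k then 1 else 0)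

/-- red-ball count trajectory. -/
def erwRt (y : ℕ) (e : ℕ → Bool) (n : ℕ) : ℕ :=
  y + ∑ k ∈ Finset.Icc 1 (n-1), (if e k then 0 else 1)

/-- step sequence of the ERW determined by first step `c` and sign sequence `e`. -/
noncomputable def erwSt (c : ℝ) (e : ℕ → Bool) (k : ℕ) : ℝ :=
  if k = 1 then c else (if e (k-1) then 1 else -1)

/-- one-step transition probability along the trajectory. -/
noncomputable def erwQ (p : ℝ) (x y : ℕ) (e : ℕ → Bool) (k : ℕ) : ℝ :=
  if e k then (p * erwBt x e k + (1-p) * erwRt y e k)/k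
  else (p * erwRt y e k + (1-p) * erwBt x e k)/k

lemma erwBt_one (x : ℕ) (e : ℕ → Bool) : erwBt x e 1 = x := by simp [erwBt]

lemma erwRt_one (y : ℕ) (e : ℕ → Bool) : erwRt y e 1 = y := by simp [erwRt]

lemma erwBt_succ (x : ℕ) (e : ℕ → Bool) (n : ℕ) (hn : 1 ≤ n) :
    erwBt x e (n+1) = erwBt x e n + (if e n then 1 else 0) := by
  unfold erwBt
  have h1 : n + 1 - 1 = (n-1) + 1 := by omega
  rw [h1, Finset.sum_Icc_succ_top (by omega : 1 ≤ n - 1 + 1)]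
  have h2 : n - 1 + 1 = n := by omega
  rw [h2, add_assoc]

lemma erwRt_succ (y : ℕ) (e : ℕ → Bool) (n : ℕ) (hn : 1 ≤ n) :
    erwRt y e (n+1) = erwRt y e n + (if e n then 0 else 1) := by
  unfold erwRt
  have h1 : n + 1 - 1 = (n-1) + 1 := by omega
  rw [h1, Finset.sum_Icc_succ_top (by omega : 1 ≤ n - 1 + 1)]
  have h2 : n - 1 + 1 = n := by omega
  rw [h2, add_assoc]

lemma erwBt_add_rt (x y : ℕ) (hxy : x + y = 1) (e : ℕ → Bool) :
    ∀ n, 1 ≤ n → erwBt x e n + erwRt y e n = n := by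
  intro n hn
  induction n, hn using Nat.le_induction with
  | base => rw [erwBt_one, erwRt_one, hxy]
  | succ n hn ih =>
    rw [erwBt_succ x e n hn, erwRt_succ y e n hn]
    cases h : e n <;> simp [h] <;> omega

lemma erwBt_congr (x : ℕ) (e₁ e₂ : ℕ → Bool) (n : ℕ)
    (h : ∀ k, 1 ≤ k → k ≤ n - 1 → e₁ k = e₂ k) :
    erwBt x e₁ n = erwBt x e₂ n := by
  unfold erwBt
  congr 1
  refine Finset.sum_congr rfl fun k hk => ?_
  rw [Finset.mem_Icc] at hk
  rw [h k hk.1 hk.2]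

lemma erwRt_congr (y : ℕ) (e₁ e₂ : ℕ → Bool) (n : ℕ)
    (h : ∀ k, 1 ≤ k → k ≤ n - 1 → e₁ k = e₂ k) :
    erwRt y e₁ n = erwRt y e₂ n := by
  unfold erwRt
  congr 1
  refine Finset.sum_congr rfl fun k hk => ?_
  rw [Finset.mem_Icc] at hk
  rw [h k hk.1 hk.2]

lemma erwSt_mem (c : ℝ) (hc : c = 1 ∨ c = -1) (e : ℕ → Bool) (k : ℕ) :
    erwSt c e k = 1 ∨ erwSt c e k = -1 := by
  unfold erwSt; split_ifs <;> tauto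

lemma erw_count (x y : ℕ) (c : ℝ)
    (hx : (x = 1 ∧ y = 0 ∧ c = 1) ∨ (x = 0 ∧ y = 1 ∧ c = -1)) (e : ℕ → Bool) :
    ∀ n, 1 ≤ n →
    (∑ k ∈ Finset.Icc 1 n, (if erwSt c e k = 1 then (1:ℝ) else 0)) = erwBt x e n ∧
    (∑ k ∈ Finset.Icc 1 n, (if erwSt c e k = -1 then (1:ℝ) else 0)) = erwRt y e n := by
  intro n hn
  induction n, hn using Nat.le_induction with
  | base =>
    rw [Finset.Icc_self, Finset.sum_singleton, Finset.sum_singleton, erwBt_one, erwRt_one]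
    have h1 : erwSt c e 1 = c := if_pos rfl
    rcases hx with ⟨hx1, hy1, hc1⟩ | ⟨hx1, hy1, hc1⟩ <;> subst hx1 <;> subst hy1 <;>
      rw [h1, hc1] <;> norm_num
  | succ n hn ih =>
    rw [Finset.sum_Icc_succ_top (by omega : 1 ≤ n + 1),
      Finset.sum_Icc_succ_top (by omega : 1 ≤ n + 1), ih.1, ih.2,
      erwBt_succ x e n hn, erwRt_succ y e n hn]
    have h1 : erwSt c e (n+1) = if e n then 1 else -1 := by
      unfold erwSt
      rw [if_neg (by omega)]
      simp
    cases h : e n <;> rw [h1, h] <;> push_cast <;> norm_num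

lemma erw_st_sum (x y : ℕ) (c : ℝ)
    (hx : (x = 1 ∧ y = 0 ∧ c = 1) ∨ (x = 0 ∧ y = 1 ∧ c = -1)) (e : ℕ → Bool)
    (n : ℕ) (hn : 1 ≤ n) :
    ∑ k ∈ Finset.Icc 1 n, erwSt c e k = (erwBt x e n : ℝ) - (erwRt y e n : ℝ) := by
  have hc : c = 1 ∨ c = -1 := by tauto
  rw [← (erw_count x y c hx e n hn).1, ← (erw_count x y c hx e n hn).2,
    ← Finset.sum_sub_distrib]
  refine Finset.sum_congr rfl fun k _ => ?_
  rcases erwSt_mem c hc e k with h | h <;> rw [h] <;> norm_num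

/-- extension of a finite sign vector to `ℕ → Bool`. -/
def erwExt (M : ℕ) (ε : Fin M → Bool) (k : ℕ) : Bool :=
  if h : 1 ≤ k ∧ k ≤ M then ε ⟨k-1, by omega⟩ else false

lemma erwExt_eq (M : ℕ) (ε : Fin M → Bool) (k : ℕ) (h1 : 1 ≤ k) (h2 : k ≤ M) :
    erwExt M ε k = ε ⟨k-1, by omega⟩ := dif_pos ⟨h1, h2⟩

/-- the natural filtration of the urn. -/
def urnFilt {Ω : Type*} (B R : ℕ → Ω → ℕ) (n : ℕ) : MeasurableSpace Ω :=
  ⨆ k ∈ Set.Icc 1 n, MeasurableSpace.comap (fun ω => (B k ω, R k ω)) inferInstance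

/-- the natural filtration of the ERW. -/
def erwFilt {Ω' : Type*} (σ : ℕ → Ω' → ℝ) (n : ℕ) : MeasurableSpace Ω' :=
  ⨆ k ∈ Set.Icc 1 n, MeasurableSpace.comap (σ k) inferInstance

/-- the events describing the urn trajectory. -/
def urnEvent {Ω : Type*} (B R : ℕ → Ω → ℕ) (x y : ℕ) (e : ℕ → Bool) (n : ℕ) : Set Ω :=
  {ω | ∀ k ∈ Finset.Icc 1 n, B k ω = erwBt x e k ∧ R k ω = erwRt y e k}

/-- the events describing the ERW trajectory. -/
def erwEvent {Ω' : Type*} (σ : ℕ → Ω' → ℝ) (c : ℝ) (e : ℕ → Bool) (n : ℕ) : Set Ω' :=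
  {ω' | ∀ k ∈ Finset.Icc 1 n, σ k ω' = erwSt c e k}

lemma urnEvent_measurable {Ω : Type*} {m0 : MeasurableSpace Ω}
    (B R : ℕ → Ω → ℕ) (hBmeas : ∀ n, Measurable (B n)) (hRmeas : ∀ n, Measurable (R n))
    (x y : ℕ) (e : ℕ → Bool) (n : ℕ) :
    MeasurableSet (urnEvent B R x y e n) := by
  have : urnEvent B R x y e n =
      ⋂ k ∈ Finset.Icc 1 n,
        ((fun ω => (B k ω, R k ω)) ⁻¹' {(erwBt x e k, erwRt y e k)}) := by
    ext ω
    simp [urnEvent, Prod.ext_iff]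
  rw [this]
  exact MeasurableSet.biInter (Finset.Icc 1 n).countable_toSet fun k _ =>
    ((hBmeas k).prodMk (hRmeas k)) (measurableSet_singleton _)

lemma urnEvent_measurable' {Ω : Type*}
    (B R : ℕ → Ω → ℕ) (x y : ℕ) (e : ℕ → Bool) (n : ℕ) :
    MeasurableSet[urnFilt B R n] (urnEvent B R x y e n) := by
  rw [urnFilt]
  have : urnEvent B R x y e n =
      ⋂ k ∈ Set.Icc 1 n,
        ((fun ω => (B k ω, R k ω)) ⁻¹' {(erwBt x e k, erwRt y e k)}) := by
    ext ω
    simp [urnEvent, Prod.ext_iff, Set.mem_Icc]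
  rw [this]
  refine MeasurableSet.biInter (Set.to_countable _) fun k hk' => ?_
  have hle : MeasurableSpace.comap (fun ω => (B k ω, R k ω)) inferInstance ≤
      ⨆ k ∈ Set.Icc 1 n, MeasurableSpace.comap (fun ω => (B k ω, R k ω)) inferInstance :=
    le_iSup₂ (f := fun k (_ : k ∈ Set.Icc 1 n) =>
      MeasurableSpace.comap (fun ω => (B k ω, R k ω)) inferInstance) k hk'
  exact hle _ ⟨{(erwBt x e k, erwRt y e k)}, measurableSet_singleton _, rfl⟩

lemma urn_step {Ω : Type*} {m0 : MeasurableSpace Ω} (μ : Measure Ω) [IsProbabilityMeasure μ]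
    (p : ℝ) (x y : ℕ) (hxy : x + y = 1)
    (B R : ℕ → Ω → ℕ)
    (hBmeas : ∀ n, Measurable (B n)) (hRmeas : ∀ n, Measurable (R n))
    (hstep : ∀ n : ℕ, 1 ≤ n → ∀ᵐ ω ∂μ,
      (B (n+1) ω = B n ω + 1 ∧ R (n+1) ω = R n ω) ∨
      (B (n+1) ω = B n ω ∧ R (n+1) ω = R n ω + 1))
    (hurn : ∀ n : ℕ, 1 ≤ n →
      μ[(fun ω => if B (n+1) ω = B n ω + 1 then (1:ℝ) else 0) |
          ⨆ k ∈ Set.Icc 1 n, MeasurableSpace.comap (fun ω => (B k ω, R k ω)) inferInstance]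
        =ᵐ[μ] fun ω => (p * (B n ω : ℝ) + (1 - p) * (R n ω : ℝ)) / n)
    (e : ℕ → Bool) (n : ℕ) (hn : 1 ≤ n) :
    (μ (urnEvent B R x y e (n+1))).toReal
      = erwQ p x y e n * (μ (urnEvent B R x y e n)).toReal := by
  classical
  have hm : urnFilt B R n ≤ m0 := by
    rw [urnFilt]
    refine iSup₂_le fun k _ => ?_
    exact measurable_iff_comap_le.1 ((hBmeas k).prodMk (hRmeas k))
  have hUm : MeasurableSet[urnFilt B R n] (urnEvent B R x y e n) :=
    urnEvent_measurable' B R x y e n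
  have hU0 : MeasurableSet[m0] (urnEvent B R x y e n) := hm _ hUm
  set E : Set Ω := {ω | B (n+1) ω = B n ω + 1} with hEdef
  have hE : MeasurableSet[m0] E := by
    have : E = (fun ω => (B (n+1) ω, B n ω)) ⁻¹' {q : ℕ × ℕ | q.1 = q.2 + 1} := by
      ext ω; simp [hEdef]
    rw [this]
    exact ((hBmeas (n+1)).prodMk (hBmeas n)) ((Set.to_countable _).measurableSet)
  set f : Ω → ℝ := fun ω => if B (n+1) ω = B n ω + 1 then (1:ℝ) else 0 with hfdef
  have hfind : f = E.indicator (fun _ => (1:ℝ)) := by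
    funext ω
    by_cases h : B (n+1) ω = B n ω + 1 <;> simp [hfdef, Set.indicator_apply, hEdef, h]
  have hfint : Integrable f μ := by
    rw [hfind]; exact (integrable_const 1).indicator hE
  -- the conditional probability on `urnEvent n` is the constant `q⁺`
  have hint : ∫ ω in urnEvent B R x y e n, f ω ∂μ
      = ((p * (erwBt x e n : ℝ) + (1-p) * (erwRt y e n : ℝ))/n)
        * (μ (urnEvent B R x y e n)).toReal := by
    calc ∫ ω in urnEvent B R x y e n, f ω ∂μ
        = ∫ ω in urnEvent B R x y e n,
            (μ[f | urnFilt B R n]) ω ∂μ := (setIntegral_condExp hm hfint hUm).symm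
      _ = ∫ ω in urnEvent B R x y e n,
            ((p * (B n ω : ℝ) + (1 - p) * (R n ω : ℝ)) / n) ∂μ := by
          refine setIntegral_congr_ae hU0 ?_
          have h := hurn n hn
          rw [show (⨆ k ∈ Set.Icc 1 n,
            MeasurableSpace.comap (fun ω => (B k ω, R k ω)) inferInstance) = urnFilt B R n
            from rfl] at h
          exact h.mono fun ω h _ => h
      _ = ∫ _ω in urnEvent B R x y e n,
            ((p * (erwBt x e n : ℝ) + (1-p) * (erwRt y e n : ℝ))/n) ∂μ := by
          refine setIntegral_congr_fun hU0 fun ω hω => ?_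
          have h1 := hω n (Finset.mem_Icc.2 ⟨hn, le_refl n⟩)
          rw [h1.1, h1.2]
      _ = ((p * (erwBt x e n : ℝ) + (1-p) * (erwRt y e n : ℝ))/n)
            * (μ (urnEvent B R x y e n)).toReal := by
          rw [setIntegral_const, smul_eq_mul, mul_comm, measureReal_def]
  have hinterE : (μ (urnEvent B R x y e n ∩ E)).toReal
      = ((p * (erwBt x e n : ℝ) + (1-p) * (erwRt y e n : ℝ))/n)
        * (μ (urnEvent B R x y e n)).toReal := by
    rw [← hint, hfind, setIntegral_indicator hE, setIntegral_const, smul_eq_mul, mul_one, measureReal_def]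
  cases hb : e n with
  | true =>
    have hae : (urnEvent B R x y e (n+1) : Set Ω)
        =ᵐ[μ] (urnEvent B R x y e n ∩ E : Set Ω) := by
      rw [Filter.eventuallyEq_set]
      filter_upwards [hstep n hn] with ω hω
      constructor
      · intro h
        have hBn : B n ω = erwBt x e n :=
          (h n (Finset.mem_Icc.2 ⟨hn, by omega⟩)).1
        have hBn1 : B (n+1) ω = erwBt x e (n+1) :=
          (h (n+1) (Finset.mem_Icc.2 ⟨by omega, le_refl _⟩)).1
        refine ⟨fun k hk => h k (Finset.Icc_subset_Icc_right (by omega) hk), ?_⟩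
        have hbt := erwBt_succ x e n hn
        rw [hb] at hbt
        simp only [if_true, Bool.false_eq_true, if_false] at hbt
        show B (n+1) ω = B n ω + 1
        omega
      · rintro ⟨h, hBadd⟩
        have hBadd' : B (n+1) ω = B n ω + 1 := hBadd
        intro k hk
        rw [Finset.mem_Icc] at hk
        rcases Nat.lt_or_ge k (n+1) with hlt | hge
        · exact h k (Finset.mem_Icc.2 ⟨hk.1, by omega⟩)
        · have hkeq : k = n + 1 := by omega
          subst hkeq
          have hBn : B n ω = erwBt x e n :=
            (h n (Finset.mem_Icc.2 ⟨hn, le_refl n⟩)).1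
          have hRn : R n ω = erwRt y e n :=
            (h n (Finset.mem_Icc.2 ⟨hn, le_refl n⟩)).2
          have hbt := erwBt_succ x e n hn
          have hrt := erwRt_succ y e n hn
          rw [hb] at hbt hrt
          simp only [if_true, Bool.false_eq_true, if_false] at hbt hrt
          rcases hω with ⟨h1, h2⟩ | ⟨h1, h2⟩
          · constructor <;> omega
          · constructor <;> omega
    rw [measure_congr hae, hinterE, erwQ, hb, if_pos rfl]
  | false =>
    have hae : (urnEvent B R x y e (n+1) : Set Ω)
        =ᵐ[μ] (urnEvent B R x y e n \ E : Set Ω) := by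
      rw [Filter.eventuallyEq_set]
      filter_upwards [hstep n hn] with ω hω
      constructor
      · intro h
        have hBn : B n ω = erwBt x e n :=
          (h n (Finset.mem_Icc.2 ⟨hn, by omega⟩)).1
        have hBn1 : B (n+1) ω = erwBt x e (n+1) :=
          (h (n+1) (Finset.mem_Icc.2 ⟨by omega, le_refl _⟩)).1
        refine ⟨fun k hk => h k (Finset.Icc_subset_Icc_right (by omega) hk), ?_⟩
        have hbt := erwBt_succ x e n hn
        rw [hb] at hbt
        simp only [if_true, Bool.false_eq_true, if_false] at hbt
        show ¬ (B (n+1) ω = B n ω + 1)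
        omega
      · rintro ⟨h, hBnot⟩
        have hBnot' : ¬ (B (n+1) ω = B n ω + 1) := hBnot
        intro k hk
        rw [Finset.mem_Icc] at hk
        rcases Nat.lt_or_ge k (n+1) with hlt | hge
        · exact h k (Finset.mem_Icc.2 ⟨hk.1, by omega⟩)
        · have hkeq : k = n + 1 := by omega
          subst hkeq
          have hBn : B n ω = erwBt x e n :=
            (h n (Finset.mem_Icc.2 ⟨hn, le_refl n⟩)).1
          have hRn : R n ω = erwRt y e n :=
            (h n (Finset.mem_Icc.2 ⟨hn, le_refl n⟩)).2
          have hbt := erwBt_succ x e n hn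
          have hrt := erwRt_succ y e n hn
          rw [hb] at hbt hrt
          simp only [if_true, Bool.false_eq_true, if_false] at hbt hrt
          rcases hω with ⟨h1, h2⟩ | ⟨h1, h2⟩
          · constructor <;> omega
          · constructor <;> omega
    have hdiff : (μ (urnEvent B R x y e n \ E)).toReal
        = (μ (urnEvent B R x y e n)).toReal - (μ (urnEvent B R x y e n ∩ E)).toReal := by
      have h1 := measure_inter_add_diff (urnEvent B R x y e n) hE (μ := μ)
      have h2 : μ (urnEvent B R x y e n ∩ E) ≠ ⊤ := measure_ne_top μ _
      have h3 : μ (urnEvent B R x y e n \ E) ≠ ⊤ := measure_ne_top μ _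
      have := congrArg ENNReal.toReal h1
      rw [ENNReal.toReal_add h2 h3] at this
      linarith
    rw [measure_congr hae, hdiff, hinterE, erwQ, hb, if_neg (by simp)]
    have hn0 : (n:ℝ) ≠ 0 := Nat.cast_ne_zero.2 (by omega)
    have hbr : (erwBt x e n : ℝ) + (erwRt y e n : ℝ) = n := by
      have := erwBt_add_rt x y hxy e n hn
      exact_mod_cast congrArg (Nat.cast : ℕ → ℝ) this
    have hkey : 1 - (p * (erwBt x e n : ℝ) + (1-p) * (erwRt y e n : ℝ))/n
        = (p * (erwRt y e n : ℝ) + (1-p) * (erwBt x e n : ℝ))/n := by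
      field_simp
      linarith
    rw [← hkey]
    ring
lemma erwEvent_measurable {Ω' : Type*} {m0' : MeasurableSpace Ω'}
    (σ : ℕ → Ω' → ℝ) (hσmeas : ∀ k, Measurable (σ k))
    (c : ℝ) (e : ℕ → Bool) (n : ℕ) :
    MeasurableSet (erwEvent σ c e n) := by
  have : erwEvent σ c e n = ⋂ k ∈ Set.Icc 1 n, (σ k ⁻¹' {erwSt c e k}) := by
    ext ω'
    simp [erwEvent, Set.mem_Icc]
  rw [this]
  exact MeasurableSet.biInter (Set.to_countable _) fun k _ =>
    (hσmeas k) (measurableSet_singleton _)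

lemma erwEvent_measurable' {Ω' : Type*}
    (σ : ℕ → Ω' → ℝ) (c : ℝ) (e : ℕ → Bool) (n : ℕ) :
    MeasurableSet[erwFilt σ n] (erwEvent σ c e n) := by
  rw [erwFilt]
  have : erwEvent σ c e n = ⋂ k ∈ Set.Icc 1 n, (σ k ⁻¹' {erwSt c e k}) := by
    ext ω'
    simp [erwEvent, Set.mem_Icc]
  rw [this]
  refine MeasurableSet.biInter (Set.to_countable _) fun k hk' => ?_
  have hle : MeasurableSpace.comap (σ k) inferInstance ≤
      ⨆ k ∈ Set.Icc 1 n, MeasurableSpace.comap (σ k) inferInstance :=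
    le_iSup₂ (f := fun k (_ : k ∈ Set.Icc 1 n) =>
      MeasurableSpace.comap (σ k) inferInstance) k hk'
  exact hle _ ⟨{erwSt c e k}, measurableSet_singleton _, rfl⟩

lemma erw_step {Ω' : Type*} {m0' : MeasurableSpace Ω'} (ν : Measure Ω')
    [IsProbabilityMeasure ν]
    (p : ℝ) (x y : ℕ) (c : ℝ)
    (hx : (x = 1 ∧ y = 0 ∧ c = 1) ∨ (x = 0 ∧ y = 1 ∧ c = -1))
    (σ : ℕ → Ω' → ℝ) (hσmeas : ∀ k, Measurable (σ k))
    (hmodel : ∀ n : ℕ, 1 ≤ n → ∀ s : ℝ, (s = 1 ∨ s = -1) →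
      ν[(fun ω' => if σ (n+1) ω' = s then (1:ℝ) else 0) |
          ⨆ k ∈ Set.Icc 1 n, MeasurableSpace.comap (σ k) inferInstance]
        =ᵐ[ν] fun ω' => (n : ℝ)⁻¹ * ∑ k ∈ Finset.Icc 1 n,
          (p * (if σ k ω' = s then (1:ℝ) else 0)
            + (1 - p) * (if σ k ω' = -s then (1:ℝ) else 0)))
    (e : ℕ → Bool) (n : ℕ) (hn : 1 ≤ n) :
    (ν (erwEvent σ c e (n+1))).toReal
      = erwQ p x y e n * (ν (erwEvent σ c e n)).toReal := by
  classical
  have hm : erwFilt σ n ≤ m0' := by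
    rw [erwFilt]
    refine iSup₂_le fun k _ => ?_
    exact measurable_iff_comap_le.1 (hσmeas k)
  have hVm : MeasurableSet[erwFilt σ n] (erwEvent σ c e n) := erwEvent_measurable' σ c e n
  have hV0 : MeasurableSet[m0'] (erwEvent σ c e n) := hm _ hVm
  have hc : c = 1 ∨ c = -1 := by tauto
  have hs0 : erwSt c e (n+1) = if e n then (1:ℝ) else -1 := by
    unfold erwSt
    rw [if_neg (by omega : ¬ (n+1) = 1)]
    norm_num
  have hs : erwSt c e (n+1) = 1 ∨ erwSt c e (n+1) = -1 := erwSt_mem c hc e (n+1)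
  set E' : Set Ω' := {ω' | σ (n+1) ω' = erwSt c e (n+1)} with hE'def
  have hE' : MeasurableSet[m0'] E' := by
    have : E' = σ (n+1) ⁻¹' {erwSt c e (n+1)} := by ext ω'; simp [hE'def]
    rw [this]
    exact (hσmeas (n+1)) (measurableSet_singleton _)
  set f : Ω' → ℝ := fun ω' => if σ (n+1) ω' = erwSt c e (n+1) then (1:ℝ) else 0 with hfdef
  have hfind : f = E'.indicator (fun _ => (1:ℝ)) := by
    funext ω'
    by_cases h : σ (n+1) ω' = erwSt c e (n+1) <;>
      simp [hfdef, Set.indicator_apply, hE'def, h]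
  have hfint : Integrable f ν := by
    rw [hfind]; exact (integrable_const 1).indicator hE'
  have hVsucc : erwEvent σ c e (n+1) = erwEvent σ c e n ∩ E' := by
    ext ω'
    simp only [erwEvent, Set.mem_inter_iff, Set.mem_setOf_eq, hE'def]
    constructor
    · intro h
      exact ⟨fun k hk => h k (Finset.Icc_subset_Icc_right (by omega) hk),
        h (n+1) (Finset.mem_Icc.2 ⟨by omega, le_refl _⟩)⟩
    · rintro ⟨h, hlast⟩ k hk
      rw [Finset.mem_Icc] at hk
      rcases Nat.lt_or_ge k (n+1) with hlt | hge
      · exact h k (Finset.mem_Icc.2 ⟨hk.1, by omega⟩)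
      · have hkeq : k = n + 1 := by omega
        subst hkeq
        exact hlast
  calc (ν (erwEvent σ c e (n+1))).toReal
      = (ν (erwEvent σ c e n ∩ E')).toReal := by rw [hVsucc]
    _ = ∫ ω' in erwEvent σ c e n, f ω' ∂ν := by
        rw [hfind, setIntegral_indicator hE', setIntegral_const, smul_eq_mul, mul_one, measureReal_def]
    _ = ∫ ω' in erwEvent σ c e n, (ν[f | erwFilt σ n]) ω' ∂ν :=
        (setIntegral_condExp hm hfint hVm).symm
    _ = ∫ ω' in erwEvent σ c e n,
          ((n : ℝ)⁻¹ * ∑ k ∈ Finset.Icc 1 n,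
            (p * (if σ k ω' = erwSt c e (n+1) then (1:ℝ) else 0)
              + (1 - p) * (if σ k ω' = -(erwSt c e (n+1)) then (1:ℝ) else 0))) ∂ν := by
        refine setIntegral_congr_ae hV0 ?_
        have h := hmodel n hn (erwSt c e (n+1)) hs
        rw [show (⨆ k ∈ Set.Icc 1 n, MeasurableSpace.comap (σ k) inferInstance)
          = erwFilt σ n from rfl] at h
        exact h.mono fun ω' h _ => h
    _ = ∫ _ω' in erwEvent σ c e n, (erwQ p x y e n) ∂ν := by
        refine setIntegral_congr_fun hV0 fun ω' hω' => ?_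
        have hcongr : ∀ k ∈ Finset.Icc 1 n,
            (p * (if σ k ω' = erwSt c e (n+1) then (1:ℝ) else 0)
              + (1 - p) * (if σ k ω' = -(erwSt c e (n+1)) then (1:ℝ) else 0))
            = (p * (if erwSt c e k = erwSt c e (n+1) then (1:ℝ) else 0)
              + (1 - p) * (if erwSt c e k = -(erwSt c e (n+1)) then (1:ℝ) else 0)) := by
          intro k hk
          rw [hω' k hk]
        rw [Finset.sum_congr rfl hcongr, Finset.sum_add_distrib,
          ← Finset.mul_sum, ← Finset.mul_sum]
        cases hb : e n with
        | true =>
          rw [hb] at hs0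
          simp only [if_true] at hs0
          rw [hs0]
          have h1 := (erw_count x y c hx e n hn).1
          have h2 := (erw_count x y c hx e n hn).2
          rw [show -(1:ℝ) = (-1:ℝ) from rfl, h1, h2]
          rw [erwQ, hb, if_pos rfl, inv_mul_eq_div]
        | false =>
          rw [hb] at hs0
          simp only [Bool.false_eq_true, if_false] at hs0
          rw [hs0]
          have h1 := (erw_count x y c hx e n hn).1
          have h2 := (erw_count x y c hx e n hn).2
          simp only [neg_neg]
          rw [h1, h2]
          rw [erwQ, hb]
          simp only [Bool.false_eq_true, if_false]
          rw [inv_mul_eq_div]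
    _ = erwQ p x y e n * (ν (erwEvent σ c e n)).toReal := by
        rw [setIntegral_const, smul_eq_mul, mul_comm, measureReal_def]
lemma urn_prob {Ω : Type*} {m0 : MeasurableSpace Ω} (μ : Measure Ω) [IsProbabilityMeasure μ]
    (p : ℝ) (x y : ℕ) (hxy : x + y = 1)
    (B R : ℕ → Ω → ℕ)
    (hBmeas : ∀ n, Measurable (B n)) (hRmeas : ∀ n, Measurable (R n))
    (hinit : ∀ᵐ ω ∂μ, B 1 ω = x ∧ R 1 ω = y)
    (hstep : ∀ n : ℕ, 1 ≤ n → ∀ᵐ ω ∂μ,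
      (B (n+1) ω = B n ω + 1 ∧ R (n+1) ω = R n ω) ∨
      (B (n+1) ω = B n ω ∧ R (n+1) ω = R n ω + 1))
    (hurn : ∀ n : ℕ, 1 ≤ n →
      μ[(fun ω => if B (n+1) ω = B n ω + 1 then (1:ℝ) else 0) |
          ⨆ k ∈ Set.Icc 1 n, MeasurableSpace.comap (fun ω => (B k ω, R k ω)) inferInstance]
        =ᵐ[μ] fun ω => (p * (B n ω : ℝ) + (1 - p) * (R n ω : ℝ)) / n)
    (e : ℕ → Bool) : ∀ n, 1 ≤ n →
    (μ (urnEvent B R x y e n)).toReal = ∏ k ∈ Finset.Icc 1 (n-1), erwQ p x y e k := by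
  intro n hn
  induction n, hn using Nat.le_induction with
  | base =>
    have h1 : (Set.univ : Set Ω) =ᵐ[μ] (urnEvent B R x y e 1 : Set Ω) := by
      rw [Filter.eventuallyEq_set]
      filter_upwards [hinit] with ω h
      simp [urnEvent, Finset.Icc_self, erwBt_one, erwRt_one, h.1, h.2]
    rw [← measure_congr h1]
    simp
  | succ n hn ih =>
    rw [urn_step μ p x y hxy B R hBmeas hRmeas hstep hurn e n hn, ih]
    have h1 : n + 1 - 1 = (n-1) + 1 := by omega
    rw [h1, Finset.prod_Icc_succ_top (by omega : 1 ≤ n - 1 + 1),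
      (by omega : n - 1 + 1 = n), mul_comm]

lemma erw_prob {Ω' : Type*} {m0' : MeasurableSpace Ω'} (ν : Measure Ω')
    [IsProbabilityMeasure ν]
    (p : ℝ) (x y : ℕ) (c : ℝ)
    (hx : (x = 1 ∧ y = 0 ∧ c = 1) ∨ (x = 0 ∧ y = 1 ∧ c = -1))
    (σ : ℕ → Ω' → ℝ) (hσmeas : ∀ k, Measurable (σ k))
    (hfirst : ∀ᵐ ω' ∂ν, σ 1 ω' = c)
    (hmodel : ∀ n : ℕ, 1 ≤ n → ∀ s : ℝ, (s = 1 ∨ s = -1) →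
      ν[(fun ω' => if σ (n+1) ω' = s then (1:ℝ) else 0) |
          ⨆ k ∈ Set.Icc 1 n, MeasurableSpace.comap (σ k) inferInstance]
        =ᵐ[ν] fun ω' => (n : ℝ)⁻¹ * ∑ k ∈ Finset.Icc 1 n,
          (p * (if σ k ω' = s then (1:ℝ) else 0)
            + (1 - p) * (if σ k ω' = -s then (1:ℝ) else 0)))
    (e : ℕ → Bool) : ∀ n, 1 ≤ n →
    (ν (erwEvent σ c e n)).toReal = ∏ k ∈ Finset.Icc 1 (n-1), erwQ p x y e k := by
  intro n hn
  induction n, hn using Nat.le_induction with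
  | base =>
    have h1 : (Set.univ : Set Ω') =ᵐ[ν] (erwEvent σ c e 1 : Set Ω') := by
      rw [Filter.eventuallyEq_set]
      filter_upwards [hfirst] with ω' h
      simp [erwEvent, Finset.Icc_self, erwSt, h]
    rw [← measure_congr h1]
    simp
  | succ n hn ih =>
    rw [erw_step ν p x y c hx σ hσmeas hmodel e n hn, ih]
    have h1 : n + 1 - 1 = (n-1) + 1 := by omega
    rw [h1, Finset.prod_Icc_succ_top (by omega : 1 ≤ n - 1 + 1),
      (by omega : n - 1 + 1 = n), mul_comm]

lemma urn_cover {Ω : Type*} {m0 : MeasurableSpace Ω} (μ : Measure Ω)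
    (x y : ℕ) (B R : ℕ → Ω → ℕ)
    (hinit : ∀ᵐ ω ∂μ, B 1 ω = x ∧ R 1 ω = y)
    (hstep : ∀ n : ℕ, 1 ≤ n → ∀ᵐ ω ∂μ,
      (B (n+1) ω = B n ω + 1 ∧ R (n+1) ω = R n ω) ∨
      (B (n+1) ω = B n ω ∧ R (n+1) ω = R n ω + 1))
    (M : ℕ) :
    ∀ᵐ ω ∂μ, ∃ ε : Fin M → Bool, ω ∈ urnEvent B R x y (erwExt M ε) (M+1) := by
  have hstep_all : ∀ᵐ ω ∂μ, ∀ k, 1 ≤ k →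
      ((B (k+1) ω = B k ω + 1 ∧ R (k+1) ω = R k ω) ∨
        (B (k+1) ω = B k ω ∧ R (k+1) ω = R k ω + 1)) := by
    rw [ae_all_iff]
    intro k
    by_cases hk : 1 ≤ k
    · exact (hstep k hk).mono fun ω h _ => h
    · exact Filter.Eventually.of_forall fun ω h => absurd h hk
  filter_upwards [hinit, hstep_all] with ω h1 h2
  refine ⟨fun j => decide (B (j.1+2) ω = B (j.1+1) ω + 1), ?_⟩
  set e : ℕ → Bool := erwExt M (fun j => decide (B (j.1+2) ω = B (j.1+1) ω + 1)) with hedef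
  have key : ∀ k, 1 ≤ k → k ≤ M+1 → (B k ω = erwBt x e k ∧ R k ω = erwRt y e k) := by
    intro k hk
    induction k, hk using Nat.le_induction with
    | base => intro _; rw [erwBt_one, erwRt_one]; exact h1
    | succ k hk ih =>
      intro hkM
      have hih := ih (by omega)
      have hek : e k = decide (B (k+1) ω = B k ω + 1) := by
        rw [hedef, erwExt_eq M _ k hk (by omega)]
        have h3 : k - 1 + 2 = k + 1 := by omega
        have h4 : k - 1 + 1 = k := by omega
        simp [h3, h4]
      have hbt := erwBt_succ x e k hk
      have hrt := erwRt_succ y e k hk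
      rcases h2 k hk with ⟨ha, hb2⟩ | ⟨ha, hb2⟩
      · have hee : e k = true := by rw [hek]; exact decide_eq_true ha
        rw [hee] at hbt hrt
        simp only [if_true] at hbt hrt
        constructor <;> omega
      · have hee : e k = false := by
          rw [hek]
          simp only [decide_eq_false_iff_not]
          omega
        rw [hee] at hbt hrt
        simp only [Bool.false_eq_true, if_false] at hbt hrt
        constructor <;> omega
  intro k hk
  rw [Finset.mem_Icc] at hk
  exact key k hk.1 hk.2

lemma urn_disjoint {Ω : Type*} (B R : ℕ → Ω → ℕ) (x y : ℕ) (M : ℕ)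
    (ε1 ε2 : Fin M → Bool) (hne : ε1 ≠ ε2) :
    Disjoint (urnEvent B R x y (erwExt M ε1) (M+1)) (urnEvent B R x y (erwExt M ε2) (M+1)) := by
  rw [Set.disjoint_left]
  intro ω hω1 hω2
  obtain ⟨j, hj⟩ : ∃ j, ε1 j ≠ ε2 j := by
    by_contra h
    push_neg at h
    exact hne (funext h)
  have hk1 : 1 ≤ j.1 + 1 := by omega
  have hkM : j.1 + 1 ≤ M := by have := j.2; omega
  have h11 := hω1 (j.1+1) (Finset.mem_Icc.2 ⟨by omega, by omega⟩)
  have h12 := hω1 (j.1+1+1) (Finset.mem_Icc.2 ⟨by omega, by omega⟩)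
  have h21 := hω2 (j.1+1) (Finset.mem_Icc.2 ⟨by omega, by omega⟩)
  have h22 := hω2 (j.1+1+1) (Finset.mem_Icc.2 ⟨by omega, by omega⟩)
  have hb1 := erwBt_succ x (erwExt M ε1) (j.1+1) hk1
  have hb2 := erwBt_succ x (erwExt M ε2) (j.1+1) hk1
  have hje : (⟨j.1 + 1 - 1, by omega⟩ : Fin M) = j := by
    apply Fin.ext
    simp
  have he1 : erwExt M ε1 (j.1+1) = ε1 j := by
    rw [erwExt_eq M ε1 (j.1+1) hk1 hkM, hje]
  have he2 : erwExt M ε2 (j.1+1) = ε2 j := by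
    rw [erwExt_eq M ε2 (j.1+1) hk1 hkM, hje]
  rw [he1] at hb1
  rw [he2] at hb2
  cases hc1 : ε1 j <;> cases hc2 : ε2 j
  · exact hj (by rw [hc1, hc2])
  · rw [hc1] at hb1
    rw [hc2] at hb2
    simp only [Bool.false_eq_true, if_false, if_true] at hb1 hb2
    have e1 := h11.1; have e2 := h12.1; have e3 := h21.1; have e4 := h22.1
    omega
  · rw [hc1] at hb1
    rw [hc2] at hb2
    simp only [Bool.false_eq_true, if_false, if_true] at hb1 hb2
    have e1 := h11.1; have e2 := h12.1; have e3 := h21.1; have e4 := h22.1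
    omega
  · exact hj (by rw [hc1, hc2])

lemma erw_cover {Ω' : Type*} {m0' : MeasurableSpace Ω'} (ν : Measure Ω')
    (c : ℝ) (σ : ℕ → Ω' → ℝ)
    (hval : ∀ k : ℕ, 1 ≤ k → ∀ᵐ ω' ∂ν, σ k ω' = 1 ∨ σ k ω' = -1)
    (hfirst : ∀ᵐ ω' ∂ν, σ 1 ω' = c)
    (M : ℕ) :
    ∀ᵐ ω' ∂ν, ∃ ε : Fin M → Bool, ω' ∈ erwEvent σ c (erwExt M ε) (M+1) := by
  have hval_all : ∀ᵐ ω' ∂ν, ∀ k, 1 ≤ k → (σ k ω' = 1 ∨ σ k ω' = -1) := by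
    rw [ae_all_iff]
    intro k
    by_cases hk : 1 ≤ k
    · exact (hval k hk).mono fun ω' h _ => h
    · exact Filter.Eventually.of_forall fun ω' h => absurd h hk
  filter_upwards [hfirst, hval_all] with ω' h1 h2
  refine ⟨fun j => decide (σ (j.1+2) ω' = 1), ?_⟩
  intro k hk
  rw [Finset.mem_Icc] at hk
  rcases Nat.lt_or_ge k 2 with hlt | hge
  · have hkeq : k = 1 := by omega
    subst hkeq
    rw [erwSt, if_pos rfl]
    exact h1
  · have hst : erwSt c (erwExt M (fun j => decide (σ (j.1+2) ω' = 1))) k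
        = if (erwExt M (fun j => decide (σ (j.1+2) ω' = 1))) (k-1) then (1:ℝ) else -1 := by
      rw [erwSt, if_neg (by omega : ¬ k = 1)]
    have hext : (erwExt M (fun j => decide (σ (j.1+2) ω' = 1))) (k-1)
        = decide (σ k ω' = 1) := by
      rw [erwExt_eq M _ (k-1) (by omega) (by omega)]
      have h3 : k - 1 - 1 + 2 = k := by omega
      simp [h3]
    rcases h2 k (by omega) with hv | hv
    · rw [hst, hext, hv]
      simp
    · rw [hst, hext, hv]
      norm_num

lemma erw_disjoint {Ω' : Type*} (σ : ℕ → Ω' → ℝ) (c : ℝ) (M : ℕ)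
    (ε1 ε2 : Fin M → Bool) (hne : ε1 ≠ ε2) :
    Disjoint (erwEvent σ c (erwExt M ε1) (M+1)) (erwEvent σ c (erwExt M ε2) (M+1)) := by
  rw [Set.disjoint_left]
  intro ω' hω1 hω2
  obtain ⟨j, hj⟩ : ∃ j, ε1 j ≠ ε2 j := by
    by_contra h
    push_neg at h
    exact hne (funext h)
  have hk1 : 1 ≤ j.1 + 1 := by omega
  have hkM : j.1 + 1 ≤ M := by have := j.2; omega
  have h12 := hω1 (j.1+2) (Finset.mem_Icc.2 ⟨by omega, by omega⟩)
  have h22 := hω2 (j.1+2) (Finset.mem_Icc.2 ⟨by omega, by omega⟩)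
  have hje : (⟨j.1 + 2 - 1 - 1, by omega⟩ : Fin M) = j := by
    apply Fin.ext
    simp
  have hst1 : erwSt c (erwExt M ε1) (j.1+2) = if ε1 j then (1:ℝ) else -1 := by
    rw [erwSt, if_neg (by omega : ¬ j.1 + 2 = 1),
      erwExt_eq M ε1 (j.1+2-1) (by omega) (by omega), hje]
  have hst2 : erwSt c (erwExt M ε2) (j.1+2) = if ε2 j then (1:ℝ) else -1 := by
    rw [erwSt, if_neg (by omega : ¬ j.1 + 2 = 1),
      erwExt_eq M ε2 (j.1+2-1) (by omega) (by omega), hje]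
  rw [hst1] at h12
  rw [hst2] at h22
  cases hc1 : ε1 j <;> cases hc2 : ε2 j
  · exact hj (by rw [hc1, hc2])
  · rw [hc1] at h12; rw [hc2] at h22
    simp only [Bool.false_eq_true, if_false, if_true] at h12 h22
    rw [h12] at h22
    norm_num at h22
  · rw [hc1] at h12; rw [hc2] at h22
    simp only [Bool.false_eq_true, if_false, if_true] at h12 h22
    rw [h12] at h22
    norm_num at h22
  · exact hj (by rw [hc1, hc2])

lemma measure_cond_sum {α : Type*} {mα : MeasurableSpace α} (κ : Measure α)
    {ι : Type*} [Fintype ι] (A : ι → Set α) (hAm : ∀ i, MeasurableSet (A i))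
    (hdisj : ∀ i j, i ≠ j → Disjoint (A i) (A j))
    (hcover : ∀ᵐ a ∂κ, ∃ i, a ∈ A i)
    (C : Set α) (hC : MeasurableSet C) (cond : ι → Prop) [DecidablePred cond]
    (hcond : ∀ i, A i ∩ C = if cond i then A i else ∅) :
    κ C = ∑ i, (if cond i then κ (A i) else 0) := by
  have h1 : (C : Set α) =ᵐ[κ] (⋃ i, (A i ∩ C) : Set α) := by
    rw [Filter.eventuallyEq_set]
    filter_upwards [hcover] with a ha
    constructor
    · intro haC
      obtain ⟨i, hi⟩ := ha
      exact Set.mem_iUnion.2 ⟨i, ⟨hi, haC⟩⟩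
    · intro h
      obtain ⟨i, hi⟩ := Set.mem_iUnion.1 h
      exact hi.2
  rw [measure_congr h1,
    measure_iUnion (fun i j hij => ((hdisj i j hij).mono Set.inter_subset_left
      Set.inter_subset_left)) (fun i => (hAm i).inter hC), tsum_fintype]
  refine Finset.sum_congr rfl fun i _ => ?_
  rw [hcond i]
  by_cases h : cond i
  · rw [if_pos h, if_pos h]
  · rw [if_neg h, if_neg h, measure_empty]

/-- The difference of the two colour counts in the Pólya-type urn with memory
parameter `p` and initial composition `ξ ∈ {(1,0),(0,1)}` has the same law
(as a process indexed by `n ≥ 1`) as the elephant random walk with memory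
parameter `p` and first step `S_1 = ξ¹ - ξ²`. -/
theorem erw_urn_equality_in_law
    {Ω : Type*} {m0 : MeasurableSpace Ω} (μ : Measure Ω) [IsProbabilityMeasure μ]
    {Ω' : Type*} {m0' : MeasurableSpace Ω'} (ν : Measure Ω') [IsProbabilityMeasure ν]
    (p : ℝ) (hp : p ∈ Set.Icc (0:ℝ) 1)
    (ξ : ℕ × ℕ) (hξ : ξ = (1, 0) ∨ ξ = (0, 1))
    -- the urn process: `B n` black balls, `R n` red balls at time `n`
    (B R : ℕ → Ω → ℕ)
    (hBmeas : ∀ n, Measurable (B n)) (hRmeas : ∀ n, Measurable (R n))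
    (hinit : ∀ᵐ ω ∂μ, B 1 ω = ξ.1 ∧ R 1 ω = ξ.2)
    (hstep : ∀ n : ℕ, 1 ≤ n → ∀ᵐ ω ∂μ,
      (B (n+1) ω = B n ω + 1 ∧ R (n+1) ω = R n ω) ∨
      (B (n+1) ω = B n ω ∧ R (n+1) ω = R n ω + 1))
    (hurn : ∀ n : ℕ, 1 ≤ n →
      μ[(fun ω => if B (n+1) ω = B n ω + 1 then (1:ℝ) else 0) |
          ⨆ k ∈ Set.Icc 1 n, MeasurableSpace.comap (fun ω => (B k ω, R k ω)) inferInstance]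
        =ᵐ[μ] fun ω => (p * (B n ω : ℝ) + (1 - p) * (R n ω : ℝ)) / n)
    -- the elephant random walk on `Ω'`
    (σ : ℕ → Ω' → ℝ) (hσmeas : ∀ k, Measurable (σ k))
    (hval : ∀ k : ℕ, 1 ≤ k → ∀ᵐ ω' ∂ν, σ k ω' = 1 ∨ σ k ω' = -1)
    (hfirst : ∀ᵐ ω' ∂ν, σ 1 ω' = (ξ.1 : ℝ) - (ξ.2 : ℝ))
    (S : ℕ → Ω' → ℝ) (hS : ∀ n ω', S n ω' = ∑ k ∈ Finset.Icc 1 n, σ k ω')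
    (hmodel : ∀ n : ℕ, 1 ≤ n → ∀ s : ℝ, (s = 1 ∨ s = -1) →
      ν[(fun ω' => if σ (n+1) ω' = s then (1:ℝ) else 0) |
          ⨆ k ∈ Set.Icc 1 n, MeasurableSpace.comap (σ k) inferInstance]
        =ᵐ[ν] fun ω' => (n : ℝ)⁻¹ * ∑ k ∈ Finset.Icc 1 n,
          (p * (if σ k ω' = s then (1:ℝ) else 0)
            + (1 - p) * (if σ k ω' = -s then (1:ℝ) else 0))) :
    Measure.map (fun ω => fun n : ℕ => (B (n+1) ω : ℝ) - (R (n+1) ω : ℝ)) μ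
      = Measure.map (fun ω' => fun n : ℕ => S (n+1) ω') ν := by
  classical
  have hx : (ξ.1 = 1 ∧ ξ.2 = 0 ∧ ((ξ.1:ℝ) - (ξ.2:ℝ)) = 1) ∨
      (ξ.1 = 0 ∧ ξ.2 = 1 ∧ ((ξ.1:ℝ) - (ξ.2:ℝ)) = -1) := by
    rcases hξ with h | h <;> rw [h] <;> norm_num
  have hxy : ξ.1 + ξ.2 = 1 := by
    rcases hx with ⟨h1, h2, _⟩ | ⟨h1, h2, _⟩ <;> omega
  have hfmeas : Measurable (fun ω => fun n : ℕ => (B (n+1) ω : ℝ) - (R (n+1) ω : ℝ)) := by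
    refine measurable_pi_lambda _ fun n => Measurable.sub ?_ ?_
    · exact measurable_from_nat.comp (hBmeas (n+1))
    · exact measurable_from_nat.comp (hRmeas (n+1))
  have hgmeas : Measurable (fun ω' => fun n : ℕ => S (n+1) ω') := by
    refine measurable_pi_lambda _ fun n => ?_
    have h : (fun ω' => S (n+1) ω') = fun ω' => ∑ k ∈ Finset.Icc 1 (n+1), σ k ω' :=
      funext fun ω' => hS _ _
    rw [h]
    exact Finset.measurable_sum _ fun k _ => hσmeas k
  -- the trajectory events on both sides have the same probability
  have hlaw : ∀ (e : ℕ → Bool) (n : ℕ), 1 ≤ n →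
      μ (urnEvent B R ξ.1 ξ.2 e n) = ν (erwEvent σ ((ξ.1:ℝ) - (ξ.2:ℝ)) e n) := by
    intro e n hn
    have h1 := urn_prob μ p ξ.1 ξ.2 hxy B R hBmeas hRmeas hinit hstep hurn e n hn
    have h2 := erw_prob ν p ξ.1 ξ.2 ((ξ.1:ℝ) - (ξ.2:ℝ)) hx σ hσmeas hfirst hmodel e n hn
    exact (ENNReal.toReal_eq_toReal_iff' (measure_ne_top μ _) (measure_ne_top ν _)).1
      (h1.trans h2.symm)
  haveI : IsProbabilityMeasure
      (Measure.map (fun ω => fun n : ℕ => (B (n+1) ω : ℝ) - (R (n+1) ω : ℝ)) μ) :=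
    Measure.isProbabilityMeasure_map hfmeas.aemeasurable
  haveI : IsProbabilityMeasure (Measure.map (fun ω' => fun n : ℕ => S (n+1) ω') ν) :=
    Measure.isProbabilityMeasure_map hgmeas.aemeasurable
  refine ext_of_generate_finite (measurableCylinders (fun _ : ℕ => ℝ))
    generateFrom_measurableCylinders.symm isPiSystem_measurableCylinders ?_ ?_
  · intro t ht
    obtain ⟨I, T, hT, rfl⟩ := (mem_measurableCylinders t).1 ht
    rw [Measure.map_apply hfmeas (hT.cylinder),
      Measure.map_apply hgmeas (hT.cylinder)]
    set M := I.sup id with hMdef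
    -- the condition determining whether a trajectory lies in the cylinder
    set cond : (Fin M → Bool) → Prop := fun ε =>
      I.restrict (fun n : ℕ => ((erwBt ξ.1 (erwExt M ε) (n+1) : ℝ)
        - (erwRt ξ.2 (erwExt M ε) (n+1) : ℝ))) ∈ T with hconddef
    -- urn side
    have hurnsum : μ ((fun ω => fun n : ℕ => (B (n+1) ω : ℝ) - (R (n+1) ω : ℝ))
          ⁻¹' cylinder I T)
        = ∑ ε : Fin M → Bool,
            (if cond ε then μ (urnEvent B R ξ.1 ξ.2 (erwExt M ε) (M+1)) else 0) := by
      refine measure_cond_sum μ _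
        (fun ε => urnEvent_measurable B R hBmeas hRmeas ξ.1 ξ.2 (erwExt M ε) (M+1))
        (fun ε1 ε2 hne => urn_disjoint B R ξ.1 ξ.2 M ε1 ε2 hne)
        (urn_cover μ ξ.1 ξ.2 B R hinit hstep M)
        _ (hfmeas hT.cylinder) cond ?_
      intro ε
      have hres : ∀ ω, ω ∈ urnEvent B R ξ.1 ξ.2 (erwExt M ε) (M+1) →
          I.restrict (fun n : ℕ => (B (n+1) ω : ℝ) - (R (n+1) ω : ℝ))
            = I.restrict (fun n : ℕ => ((erwBt ξ.1 (erwExt M ε) (n+1) : ℝ)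
              - (erwRt ξ.2 (erwExt M ε) (n+1) : ℝ))) := by
        intro ω hω
        funext i
        simp only [Finset.restrict]
        have hiM : (i : ℕ) ≤ M := Finset.le_sup (f := id) i.2
        have h := hω ((i : ℕ)+1) (Finset.mem_Icc.2 ⟨by omega, by omega⟩)
        show (B ((i:ℕ)+1) ω : ℝ) - (R ((i:ℕ)+1) ω : ℝ)
          = (erwBt ξ.1 (erwExt M ε) ((i:ℕ)+1) : ℝ) - (erwRt ξ.2 (erwExt M ε) ((i:ℕ)+1) : ℝ)
        rw [h.1, h.2]
      ext ω
      by_cases hc : cond ε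
      · simp only [if_pos hc, Set.mem_inter_iff, Set.mem_preimage, mem_cylinder]
        constructor
        · intro h; exact h.1
        · intro h
          refine ⟨h, ?_⟩
          have hcc : I.restrict (fun n : ℕ => ((erwBt ξ.1 (erwExt M ε) (n+1) : ℝ)
              - (erwRt ξ.2 (erwExt M ε) (n+1) : ℝ))) ∈ T := hc
          rw [hres ω h]
          exact hcc
      · simp only [if_neg hc, Set.mem_inter_iff, Set.mem_preimage, mem_cylinder]
        constructor
        · intro h
          exfalso
          apply hc
          show I.restrict (fun n : ℕ => ((erwBt ξ.1 (erwExt M ε) (n+1) : ℝ)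
              - (erwRt ξ.2 (erwExt M ε) (n+1) : ℝ))) ∈ T
          rw [← hres ω h.1]
          exact h.2
        · intro h
          exact absurd h (Set.notMem_empty ω)
    -- ERW side
    have herwsum : ν ((fun ω' => fun n : ℕ => S (n+1) ω') ⁻¹' cylinder I T)
        = ∑ ε : Fin M → Bool,
            (if cond ε then ν (erwEvent σ ((ξ.1:ℝ) - (ξ.2:ℝ)) (erwExt M ε) (M+1)) else 0) := by
      refine measure_cond_sum ν _
        (fun ε => erwEvent_measurable σ hσmeas ((ξ.1:ℝ) - (ξ.2:ℝ)) (erwExt M ε) (M+1))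
        (fun ε1 ε2 hne => erw_disjoint σ ((ξ.1:ℝ) - (ξ.2:ℝ)) M ε1 ε2 hne)
        (erw_cover ν ((ξ.1:ℝ) - (ξ.2:ℝ)) σ hval hfirst M)
        _ (hgmeas hT.cylinder) cond ?_
      intro ε
      have hres : ∀ ω', ω' ∈ erwEvent σ ((ξ.1:ℝ) - (ξ.2:ℝ)) (erwExt M ε) (M+1) →
          I.restrict (fun n : ℕ => S (n+1) ω')
            = I.restrict (fun n : ℕ => ((erwBt ξ.1 (erwExt M ε) (n+1) : ℝ)
              - (erwRt ξ.2 (erwExt M ε) (n+1) : ℝ))) := by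
        intro ω' hω'
        funext i
        simp only [Finset.restrict]
        have hiM : (i : ℕ) ≤ M := Finset.le_sup (f := id) i.2
        have hcongr : ∀ k ∈ Finset.Icc 1 ((i:ℕ)+1), σ k ω'
            = erwSt ((ξ.1:ℝ) - (ξ.2:ℝ)) (erwExt M ε) k := by
          intro k hk
          rw [Finset.mem_Icc] at hk
          exact hω' k (Finset.mem_Icc.2 ⟨hk.1, by omega⟩)
        show S ((i:ℕ)+1) ω' = _
        rw [hS, Finset.sum_congr rfl hcongr,
          erw_st_sum ξ.1 ξ.2 ((ξ.1:ℝ) - (ξ.2:ℝ)) hx (erwExt M ε) ((i:ℕ)+1) (by omega)]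
      ext ω'
      by_cases hc : cond ε
      · simp only [if_pos hc, Set.mem_inter_iff, Set.mem_preimage, mem_cylinder]
        constructor
        · intro h; exact h.1
        · intro h
          refine ⟨h, ?_⟩
          have hcc : I.restrict (fun n : ℕ => ((erwBt ξ.1 (erwExt M ε) (n+1) : ℝ)
              - (erwRt ξ.2 (erwExt M ε) (n+1) : ℝ))) ∈ T := hc
          rw [hres ω' h]
          exact hcc
      · simp only [if_neg hc, Set.mem_inter_iff, Set.mem_preimage, mem_cylinder]
        constructor
        · intro h
          exfalso
          apply hc
          show I.restrict (fun n : ℕ => ((erwBt ξ.1 (erwExt M ε) (n+1) : ℝ)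
              - (erwRt ξ.2 (erwExt M ε) (n+1) : ℝ))) ∈ T
          rw [← hres ω' h.1]
          exact h.2
        · intro h
          exact absurd h (Set.notMem_empty ω')
    rw [hurnsum, herwsum]
    refine Finset.sum_congr rfl fun ε _ => ?_
    by_cases hc : cond ε
    · rw [if_pos hc, if_pos hc, hlaw (erwExt M ε) (M+1) (by omega)]
    · rw [if_neg hc, if_neg hc]
  · rw [Measure.map_apply hfmeas MeasurableSet.univ,
      Measure.map_apply hgmeas MeasurableSet.univ,
      Set.preimage_univ, Set.preimage_univ, measure_univ, measure_univ]
end
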